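/- arXiv:1402.3998 — 11 statements merged into one kernel-verified Lean document; each statement's English description precedes it below -/
import Mathlib

section
/- Let n be a positive integer, let p_1,…,p_n be real weights such that P_k ≥ 0 for all k = 1,…,n, let (a_k)_{k=1}^n be a non-negative non-increasing sequence, let (b_k)_{k=1}^n be a non-negative non-decreasing sequence, and let B be a real number with b_k ≤ B for all k. Then ∑_{k=1}^n p_k a_k b_k ≤ B · ∑_{k=1}^n p_k a_k. -/
open Finset

lemma key_abel (n : ℕ) (hn : 0 < n) (p c : ℕ → ℝ)
    (hP : ∀ k < n, 0 ≤ ∑ i ∈ Finset.range (k + 1), p i)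
    (hc0 : ∀ k < n, 0 ≤ c k)
    (hc : ∀ i j, i ≤ j → j < n → c j ≤ c i) :
    0 ≤ ∑ k ∈ Finset.range n, p k * c k := by
  have h := Finset.sum_range_by_parts c p n
  simp only [smul_eq_mul] at h
  have heq : ∑ k ∈ Finset.range n, p k * c k = ∑ k ∈ Finset.range n, c k * p k := by
    apply Finset.sum_congr rfl; intros; ring
  rw [heq, h]
  have h1 : 0 ≤ c (n - 1) * ∑ i ∈ Finset.range n, p i := by
    apply mul_nonneg
    · exact hc0 _ (Nat.sub_lt hn one_pos)
    · have := hP (n - 1) (Nat.sub_lt hn one_pos)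
      have e : n - 1 + 1 = n := by omega
      rwa [e] at this
  have h2 : ∑ i ∈ Finset.range (n - 1), (c (i + 1) - c i) * ∑ j ∈ Finset.range (i + 1), p j ≤ 0 := by
    apply Finset.sum_nonpos
    intro i hi
    rw [Finset.mem_range] at hi
    have hi' : i + 1 < n := by omega
    apply mul_nonpos_of_nonpos_of_nonneg
    · have := hc i (i + 1) (Nat.le_succ i) hi'
      linarith
    · exact hP i (by omega)
  linarith

theorem stmt_0 (n : ℕ) (hn : 0 < n) (p a b : ℕ → ℝ) (B : ℝ)
    (hP : ∀ k < n, 0 ≤ ∑ i ∈ Finset.range (k + 1), p i)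
    (ha0 : ∀ k < n, 0 ≤ a k)
    (ha : ∀ i j, i ≤ j → j < n → a j ≤ a i)
    (hb0 : ∀ k < n, 0 ≤ b k)
    (hb : ∀ i j, i ≤ j → j < n → b i ≤ b j)
    (hbB : ∀ k < n, b k ≤ B) :
    ∑ k ∈ Finset.range n, p k * a k * b k ≤ B * ∑ k ∈ Finset.range n, p k * a k := by
  have key := key_abel n hn p (fun k => a k * (B - b k)) hP
    (fun k hk => mul_nonneg (ha0 k hk) (by linarith [hbB k hk]))
    (fun i j hij hj => by
      apply mul_le_mul (ha i j hij hj) (by linarith [hb i j hij hj]) (by linarith [hbB j hj])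
        (ha0 i (lt_of_le_of_lt hij hj)))
  have : ∑ k ∈ Finset.range n, p k * (a k * (B - b k))
      = B * ∑ k ∈ Finset.range n, p k * a k - ∑ k ∈ Finset.range n, p k * a k * b k := by
    rw [Finset.mul_sum, ← Finset.sum_sub_distrib]
    apply Finset.sum_congr rfl; intros; ring
  linarith [key, this ▸ key]
end

section
/- Let n be a positive integer, let p_1,…,p_n be real weights such that P_k ≥ 0 for all k = 1,…,n, and let (a_k)_{k=1}^n and (b_k)_{k=1}^n be non-increasing sequences with 0 < a ≤ a_k ≤ A < ∞ and 0 < b ≤ b_k ≤ B < ∞ for all k. Let p, q > 1 satisfy 1/p + 1/q = 1. Then (∑_{k=1}^n p_k a_k^q)^{1/q} · (∑_{k=1}^n p_k b_k^p)^{1/p} ≤ (pA/a)^{1/p} · (qB/b)^{1/q} · ∑_{k=1}^n p_k a_k b_k. (Here both sums ∑ p_k a_k^q and ∑ p_k b_k^p are non-negative, so the real powers are well defined.) -/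
open Finset Real

private lemma abel_nonneg (n : ℕ) (hn : 0 < n) (w x : ℕ → ℝ)
    (hP : ∀ k < n, 0 ≤ ∑ i ∈ Finset.range (k + 1), w i)
    (hmono : ∀ k, k + 1 < n → x (k + 1) ≤ x k)
    (hlast : 0 ≤ x (n - 1)) :
    0 ≤ ∑ k ∈ Finset.range n, w k * x k := by
  have h := Finset.sum_range_by_parts x w n
  simp only [smul_eq_mul] at h
  have hsum : ∑ k ∈ Finset.range n, w k * x k = ∑ k ∈ Finset.range n, x k * w k := by
    simp [mul_comm]
  rw [hsum, h]
  have h1 : 0 ≤ x (n - 1) * ∑ i ∈ Finset.range n, w i := by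
    have h' := hP (n - 1) (Nat.sub_lt hn one_pos)
    have he : n - 1 + 1 = n := Nat.succ_pred_eq_of_pos hn
    rw [he] at h'
    exact mul_nonneg hlast h'
  have h2 : ∑ i ∈ Finset.range (n - 1), (x (i + 1) - x i) * ∑ j ∈ Finset.range (i + 1), w j ≤ 0 := by
    apply Finset.sum_nonpos
    intro i hi
    rw [Finset.mem_range] at hi
    have hi' : i + 1 < n := by omega
    exact mul_nonpos_of_nonpos_of_nonneg (by linarith [hmono i hi']) (hP i (by omega))
  linarith

private lemma rpow_diff_le (q A : ℝ) (hq : 1 ≤ q) {x y : ℝ} (hy : 0 < y) (hxy : y ≤ x)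
    (hxA : x ≤ A) : x ^ q - y ^ q ≤ q * A ^ (q - 1) * (x - y) := by
  have hx : 0 < x := lt_of_lt_of_le hy hxy
  have hA : 0 < A := lt_of_lt_of_le hx hxA
  -- Bernoulli: (y/x)^q ≥ 1 + q*(y/x - 1)
  have hs : (-1 : ℝ) ≤ y / x - 1 := by
    have : 0 < y / x := div_pos hy hx
    linarith
  have hb := one_add_mul_self_le_rpow_one_add hs hq
  rw [add_sub_cancel] at hb
  -- hb : 1 + q * (y/x - 1) ≤ (y/x) ^ q
  have hdiv : (y / x) ^ q = y ^ q / x ^ q := Real.div_rpow hy.le hx.le q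
  rw [hdiv] at hb
  have hxq : 0 < x ^ q := Real.rpow_pos_of_pos hx q
  have hb2 : x ^ q * (1 + q * (y / x - 1)) ≤ y ^ q := by
    rw [mul_comm]
    exact (le_div_iff₀ hxq).mp hb
  have hexp : x ^ q = x ^ (q - 1) * x := by
    rw [← Real.rpow_add_one (ne_of_gt hx) (q - 1), sub_add_cancel]
  have hfrac : x ^ q * (y / x) = x ^ (q - 1) * y := by
    rw [hexp]; field_simp
  have key : x ^ q - y ^ q ≤ q * x ^ (q - 1) * (x - y) := by
    have expand : x ^ q * (1 + q * (y / x - 1)) = x ^ q + q * (x ^ (q - 1) * y) - q * x ^ q := by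
      have : x ^ q * (1 + q * (y / x - 1)) = x ^ q + q * (x ^ q * (y / x)) - q * x ^ q := by ring
      rw [this, hfrac]
    rw [expand] at hb2
    have : q * x ^ q = q * (x ^ (q - 1) * x) := by rw [← hexp]
    nlinarith [this]
  have hmono : x ^ (q - 1) ≤ A ^ (q - 1) :=
    Real.rpow_le_rpow hx.le hxA (by linarith)
  have h5 := mul_le_mul_of_nonneg_left
    (mul_le_mul_of_nonneg_right hmono (sub_nonneg.mpr hxy)) (by linarith : (0:ℝ) ≤ q)
  linarith

/-- Key one-sided bound. -/
private lemma key_bound (n : ℕ) (hn : 0 < n) (w a b : ℕ → ℝ) (A aLow bLow q : ℝ)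
    (hq : 1 < q)
    (hP : ∀ k < n, 0 ≤ ∑ i ∈ Finset.range (k + 1), w i)
    (ha : ∀ i j, i ≤ j → j < n → a j ≤ a i)
    (hb : ∀ i j, i ≤ j → j < n → b j ≤ b i)
    (haLow : 0 < aLow) (hbLow : 0 < bLow)
    (haBound : ∀ k < n, aLow ≤ a k ∧ a k ≤ A)
    (hbBound : ∀ k < n, bLow ≤ b k) :
    ∑ k ∈ Finset.range n, w k * a k ^ q ≤
      (q * A ^ (q - 1) / bLow) * ∑ k ∈ Finset.range n, w k * (a k * b k) := by
  set C := q * A ^ (q - 1) / bLow with hC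
  have hA : 0 < A := lt_of_lt_of_le haLow ((haBound 0 hn).1.trans (haBound 0 hn).2)
  have hq0 : 0 < q := by linarith
  have hApow : 0 < A ^ (q - 1) := Real.rpow_pos_of_pos hA _
  have hCb : C * bLow = q * A ^ (q - 1) := by
    rw [hC]; field_simp
  have habel : 0 ≤ ∑ k ∈ Finset.range n, w k * (C * (a k * b k) - a k ^ q) := by
    apply abel_nonneg n hn w _ hP
    · intro k hk1
      have hk : k < n := by omega
      have hak := haBound k hk
      have hak1 := haBound (k + 1) hk1
      have hbk := hbBound k hk
      have hbk1 := hbBound (k + 1) hk1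
      have haa : a (k + 1) ≤ a k := ha k (k + 1) (by omega) hk1
      have hbb : b (k + 1) ≤ b k := hb k (k + 1) (by omega) hk1
      have hdiff : a k ^ q - a (k + 1) ^ q ≤ q * A ^ (q - 1) * (a k - a (k + 1)) :=
        rpow_diff_le q A hq.le (lt_of_lt_of_le haLow hak1.1) haa hak.2
      have hprod : bLow * (a k - a (k + 1)) ≤ a k * b k - a (k + 1) * b (k + 1) := by
        nlinarith [hak1.1, hbk1, haLow, hbLow]
      have hCpos : 0 < C := div_pos (mul_pos hq0 hApow) hbLow
      nlinarith [mul_le_mul_of_nonneg_left hprod hCpos.le]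
    · -- last value nonneg
      have hk : n - 1 < n := Nat.sub_lt hn one_pos
      have hak := haBound (n - 1) hk
      have hbk := hbBound (n - 1) hk
      have hap : 0 < a (n - 1) := lt_of_lt_of_le haLow hak.1
      have hexp : a (n - 1) ^ q = a (n - 1) ^ (q - 1) * a (n - 1) := by
        rw [← Real.rpow_add_one (ne_of_gt hap) (q - 1), sub_add_cancel]
      have h1 : a (n - 1) ^ (q - 1) ≤ A ^ (q - 1) :=
        Real.rpow_le_rpow hap.le hak.2 (by linarith)
      have h2 : a (n - 1) ^ q ≤ q * A ^ (q - 1) * a (n - 1) := by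
        rw [hexp]
        nlinarith [mul_le_mul_of_nonneg_right h1 hap.le, mul_pos hApow hap]
      have h3 : q * A ^ (q - 1) * a (n - 1) ≤ C * (a (n - 1) * b (n - 1)) := by
        rw [← hCb]
        have : bLow * a (n - 1) ≤ b (n - 1) * a (n - 1) :=
          mul_le_mul_of_nonneg_right hbk hap.le
        nlinarith [div_pos (mul_pos hq0 hApow) hbLow]
      linarith
  have expand : ∑ k ∈ Finset.range n, w k * (C * (a k * b k) - a k ^ q)
      = C * (∑ k ∈ Finset.range n, w k * (a k * b k)) - ∑ k ∈ Finset.range n, w k * a k ^ q := by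
    rw [Finset.mul_sum, ← Finset.sum_sub_distrib]
    apply Finset.sum_congr rfl
    intro k _; ring
  rw [expand] at habel
  linarith

theorem stmt_2 (n : ℕ) (hn : 0 < n) (w a b : ℕ → ℝ) (A B : ℝ) (aLow bLow : ℝ) (p q : ℝ)
    (hp : 1 < p) (hq : 1 < q) (hpq : 1 / p + 1 / q = 1)
    (hP : ∀ k < n, 0 ≤ ∑ i ∈ Finset.range (k + 1), w i)
    (ha : ∀ i j, i ≤ j → j < n → a j ≤ a i)
    (hb : ∀ i j, i ≤ j → j < n → b j ≤ b i)
    (haLow : 0 < aLow) (hbLow : 0 < bLow)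
    (haBound : ∀ k < n, aLow ≤ a k ∧ a k ≤ A)
    (hbBound : ∀ k < n, bLow ≤ b k ∧ b k ≤ B) :
    (∑ k ∈ Finset.range n, w k * a k ^ q) ^ (1 / q) *
      (∑ k ∈ Finset.range n, w k * b k ^ p) ^ (1 / p) ≤
    (p * A / aLow) ^ (1 / p) * (q * B / bLow) ^ (1 / q) *
      ∑ k ∈ Finset.range n, w k * (a k * b k) := by
  have hA : 0 < A := lt_of_lt_of_le haLow ((haBound 0 hn).1.trans (haBound 0 hn).2)
  have hB : 0 < B := lt_of_lt_of_le hbLow ((hbBound 0 hn).1.trans (hbBound 0 hn).2)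
  have hp0 : 0 < p := by linarith
  have hq0 : 0 < q := by linarith
  set S := ∑ k ∈ Finset.range n, w k * (a k * b k) with hSdef
  set X := ∑ k ∈ Finset.range n, w k * a k ^ q with hXdef
  set Y := ∑ k ∈ Finset.range n, w k * b k ^ p with hYdef
  set C1 := q * A ^ (q - 1) / bLow with hC1
  set C2 := p * B ^ (p - 1) / aLow with hC2
  have hC1pos : 0 < C1 := div_pos (mul_pos hq0 (Real.rpow_pos_of_pos hA _)) hbLow
  have hC2pos : 0 < C2 := div_pos (mul_pos hp0 (Real.rpow_pos_of_pos hB _)) haLow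
  have hX : X ≤ C1 * S :=
    key_bound n hn w a b A aLow bLow q hq hP ha hb haLow hbLow haBound
      (fun k hk => (hbBound k hk).1)
  have hY : Y ≤ C2 * S := by
    have := key_bound n hn w b a B bLow aLow p hp hP hb ha hbLow haLow hbBound
      (fun k hk => (haBound k hk).1)
    have hcomm : ∑ k ∈ Finset.range n, w k * (b k * a k) = S := by
      rw [hSdef]; apply Finset.sum_congr rfl; intro k _; ring
    rw [hcomm] at this
    exact this
  have hS : 0 ≤ S := by
    apply abel_nonneg n hn w _ hP
    · intro k hk1
      have hk : k < n := by omega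
      have haa := ha k (k + 1) (by omega) hk1
      have hbb := hb k (k + 1) (by omega) hk1
      have h1 := (haBound (k + 1) hk1).1
      have h2 := (hbBound (k + 1) hk1).1
      nlinarith
    · have hk : n - 1 < n := Nat.sub_lt hn one_pos
      have := (haBound (n - 1) hk).1
      have := (hbBound (n - 1) hk).1
      nlinarith
  have hX0 : 0 ≤ X := by
    apply abel_nonneg n hn w _ hP
    · intro k hk1
      have hk : k < n := by omega
      exact Real.rpow_le_rpow (le_of_lt (lt_of_lt_of_le haLow (haBound (k + 1) hk1).1))
        (ha k (k + 1) (by omega) hk1) hq0.le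
    · exact Real.rpow_nonneg
        (le_of_lt (lt_of_lt_of_le haLow (haBound (n - 1) (Nat.sub_lt hn one_pos)).1)) q
  have hY0 : 0 ≤ Y := by
    apply abel_nonneg n hn w _ hP
    · intro k hk1
      have hk : k < n := by omega
      exact Real.rpow_le_rpow (le_of_lt (lt_of_lt_of_le hbLow (hbBound (k + 1) hk1).1))
        (hb k (k + 1) (by omega) hk1) hp0.le
    · exact Real.rpow_nonneg
        (le_of_lt (lt_of_lt_of_le hbLow (hbBound (n - 1) (Nat.sub_lt hn one_pos)).1)) p
  -- raise to powers
  have step1 : X ^ (1 / q) * Y ^ (1 / p) ≤ (C1 * S) ^ (1 / q) * ((C2 * S) ^ (1 / p)) := by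
    apply mul_le_mul
    · exact Real.rpow_le_rpow hX0 hX (by positivity)
    · exact Real.rpow_le_rpow hY0 hY (by positivity)
    · exact Real.rpow_nonneg hY0 _
    · exact Real.rpow_nonneg (by positivity) _
  have step2 : (C1 * S) ^ (1 / q) * ((C2 * S) ^ (1 / p)) = C1 ^ (1 / q) * C2 ^ (1 / p) * S := by
    rw [Real.mul_rpow hC1pos.le hS, Real.mul_rpow hC2pos.le hS]
    have : S ^ (1 / q) * S ^ (1 / p) = S := by
      rw [← Real.rpow_add' hS (by rw [add_comm] at hpq; rw [hpq]; norm_num)]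
      rw [show 1 / q + 1 / p = 1 by linarith]
      exact Real.rpow_one S
    calc C1 ^ (1 / q) * S ^ (1 / q) * (C2 ^ (1 / p) * S ^ (1 / p))
        = C1 ^ (1 / q) * C2 ^ (1 / p) * (S ^ (1 / q) * S ^ (1 / p)) := by ring
      _ = C1 ^ (1 / q) * C2 ^ (1 / p) * S := by rw [this]
  have hconst : C1 ^ (1 / q) * C2 ^ (1 / p)
      = (p * A / aLow) ^ (1 / p) * (q * B / bLow) ^ (1 / q) := by
    have hqne : q ≠ 0 := ne_of_gt hq0
    have hpne : p ≠ 0 := ne_of_gt hp0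
    have e1 : (q - 1) * (1 / q) = 1 / p := by
      field_simp
      field_simp at hpq
      linarith
    have e2 : (p - 1) * (1 / p) = 1 / q := by
      field_simp
      field_simp at hpq
      linarith
    have hC1eq : C1 = (q / bLow) * A ^ (q - 1) := by rw [hC1]; ring
    have hC2eq : C2 = (p / aLow) * B ^ (p - 1) := by rw [hC2]; ring
    have d1 : C1 ^ (1 / q) = (q / bLow) ^ (1 / q) * A ^ (1 / p) := by
      rw [hC1eq, Real.mul_rpow (by positivity) (by positivity), ← Real.rpow_mul hA.le, e1]
    have d2 : C2 ^ (1 / p) = (p / aLow) ^ (1 / p) * B ^ (1 / q) := by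
      rw [hC2eq, Real.mul_rpow (by positivity) (by positivity), ← Real.rpow_mul hB.le, e2]
    have t1 : (p * A / aLow) ^ (1 / p) = (p / aLow) ^ (1 / p) * A ^ (1 / p) := by
      rw [show p * A / aLow = (p / aLow) * A by ring, Real.mul_rpow (by positivity) hA.le]
    have t2 : (q * B / bLow) ^ (1 / q) = (q / bLow) ^ (1 / q) * B ^ (1 / q) := by
      rw [show q * B / bLow = (q / bLow) * B by ring, Real.mul_rpow (by positivity) hB.le]
    rw [d1, d2, t1, t2]; ring
  calc X ^ (1 / q) * Y ^ (1 / p) ≤ (C1 * S) ^ (1 / q) * ((C2 * S) ^ (1 / p)) := step1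
    _ = C1 ^ (1 / q) * C2 ^ (1 / p) * S := step2
    _ = (p * A / aLow) ^ (1 / p) * (q * B / bLow) ^ (1 / q) * S := by rw [hconst]
end

section
/- For all real numbers a, A, b, B with 0 < a ≤ A and 0 < b < B, and all p, q > 1 with 1/p + 1/q = 1, there exist a positive integer n, real weights p_1,…,p_n with P_k ≥ 0 for all k = 1,…,n, and non-increasing sequences (a_k)_{k=1}^n and (b_k)_{k=1}^n with a ≤ a_k ≤ A and b ≤ b_k ≤ B for all k, such that ∑_{k=1}^n p_k a_k^q = 0 while ∑_{k=1}^n p_k a_k b_k > 0. (Hence no positive constant depending only on a, A, b, B, p, q can bound the Hölder-type ratio (∑ p_k a_k^q)^{1/q}(∑ p_k b_k^p)^{1/p} / ∑ p_k a_k b_k from below.) -/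
open Finset Real

theorem stmt_3 (aLow A bLow B p q : ℝ)
    (haA : 0 < aLow) (haA' : aLow ≤ A) (hbB : 0 < bLow) (hbB' : bLow < B)
    (hp : 1 < p) (hq : 1 < q) (hpq : 1 / p + 1 / q = 1) :
    ∃ (n : ℕ) (_ : 0 < n) (w a b : ℕ → ℝ),
      (∀ k < n, 0 ≤ ∑ i ∈ Finset.range (k + 1), w i) ∧
      (∀ i j, i ≤ j → j < n → a j ≤ a i) ∧
      (∀ i j, i ≤ j → j < n → b j ≤ b i) ∧
      (∀ k < n, aLow ≤ a k ∧ a k ≤ A) ∧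
      (∀ k < n, bLow ≤ b k ∧ b k ≤ B) ∧
      (∑ k ∈ Finset.range n, w k * a k ^ q) = 0 ∧
      0 < ∑ k ∈ Finset.range n, w k * (a k * b k) := by
  refine ⟨2, by norm_num, (fun k => if k = 0 then 1 else -1),
    (fun _ => aLow), (fun k => if k = 0 then B else bLow), ?_, ?_, ?_, ?_, ?_, ?_, ?_⟩
  · intro k hk
    interval_cases k <;> simp [Finset.sum_range_succ]
  · intro i j _ _; exact le_refl _
  · intro i j hij hj
    by_cases hi : i = 0 <;> by_cases hjz : j = 0 <;> simp_all <;> linarith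
  · intro k _; exact ⟨le_refl _, haA'⟩
  · intro k _
    by_cases hk : k = 0 <;> simp [hk] <;> linarith
  · simp [Finset.sum_range_succ]
  · simp [Finset.sum_range_succ]
    nlinarith
end

section
/- Let n be a positive integer, let p_1,…,p_n be real weights such that P_k ≥ 0 for all k = 1,…,n, let (a_k)_{k=1}^n and (b_k)_{k=1}^n be non-negative non-increasing sequences, and let p ≥ 1. Then ∑_{k=1}^n p_k (a_k^p + b_k^p) ≤ ∑_{k=1}^n p_k (a_k + b_k)^p. -/
open Finset Real

private lemma gmono (p : ℝ) (hp : 1 ≤ p) (y : ℝ) (hy : 0 ≤ y) :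
    MonotoneOn (fun x : ℝ => (x + y) ^ p - x ^ p) (Set.Ici 0) := by
  have hderiv : ∀ x : ℝ, HasDerivAt (fun x : ℝ => (x + y) ^ p - x ^ p)
      (p * (x + y) ^ (p - 1) - p * x ^ (p - 1)) x := by
    intro x
    have h1 : HasDerivAt (fun x : ℝ => (x + y) ^ p) (p * (x + y) ^ (p - 1)) x := by
      have := (Real.hasDerivAt_rpow_const (x := x + y) (p := p) (Or.inr hp)).comp x
        ((hasDerivAt_id x).add_const y)
      simpa [Function.comp_def] using this
    exact h1.sub (Real.hasDerivAt_rpow_const (Or.inr hp))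
  apply monotoneOn_of_deriv_nonneg (convex_Ici 0)
  · exact fun x _ => ((hderiv x).differentiableAt).continuousAt.continuousWithinAt
  · exact fun x _ => ((hderiv x).differentiableAt).differentiableWithinAt
  · intro x hx
    rw [interior_Ici] at hx
    rw [(hderiv x).deriv]
    have h0 : (0:ℝ) ≤ x := le_of_lt hx
    have h1 : x ^ (p - 1) ≤ (x + y) ^ (p - 1) :=
      Real.rpow_le_rpow h0 (by linarith) (by linarith)
    nlinarith

private lemma cmono (p : ℝ) (hp : 1 ≤ p) {x' x y' y : ℝ}
    (hx' : 0 ≤ x') (hx : x' ≤ x) (hy' : 0 ≤ y') (hy : y' ≤ y) :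
    (x' + y') ^ p - x' ^ p - y' ^ p ≤ (x + y) ^ p - x ^ p - y ^ p := by
  have hx0 : (0:ℝ) ≤ x := hx'.trans hx
  have hy0 : (0:ℝ) ≤ y := hy'.trans hy
  have h1 : (x' + y') ^ p - x' ^ p ≤ (x + y') ^ p - x ^ p :=
    gmono p hp y' hy' hx' (Set.mem_Ici.mpr hx0) hx
  have h2 : (y' + x) ^ p - y' ^ p ≤ (y + x) ^ p - y ^ p :=
    gmono p hp x hx0 hy' (Set.mem_Ici.mpr hy0) hy
  rw [add_comm y' x, add_comm y x] at h2
  linarith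

theorem stmt_7 (n : ℕ) (hn : 0 < n) (w a b : ℕ → ℝ) (p : ℝ) (hp : 1 ≤ p)
    (hP : ∀ k < n, 0 ≤ ∑ i ∈ Finset.range (k + 1), w i)
    (ha0 : ∀ k < n, 0 ≤ a k) (hb0 : ∀ k < n, 0 ≤ b k)
    (ha : ∀ i j, i ≤ j → j < n → a j ≤ a i)
    (hb : ∀ i j, i ≤ j → j < n → b j ≤ b i) :
    ∑ k ∈ Finset.range n, w k * (a k ^ p + b k ^ p) ≤
      ∑ k ∈ Finset.range n, w k * (a k + b k) ^ p := by
  set c : ℕ → ℝ := fun k => (a k + b k) ^ p - a k ^ p - b k ^ p with hc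
  have hcnonneg : ∀ k < n, 0 ≤ c k := by
    intro k hk
    have := cmono p hp (le_refl 0) (ha0 k hk) (le_refl 0) (hb0 k hk)
    simpa [hc, Real.zero_rpow (by linarith : p ≠ 0)] using this
  have hcmono : ∀ i j, i ≤ j → j < n → c j ≤ c i := fun i j hij hj =>
    cmono p hp (ha0 j hj) (ha i j hij hj) (hb0 j hj) (hb i j hij hj)
  have key : 0 ≤ ∑ k ∈ Finset.range n, w k * c k := by
    have habel := Finset.sum_range_by_parts c w n
    simp only [smul_eq_mul] at habel
    have h1 : 0 ≤ c (n - 1) * ∑ i ∈ Finset.range n, w i := by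
      apply mul_nonneg (hcnonneg (n - 1) (by omega))
      have := hP (n - 1) (by omega)
      rwa [Nat.sub_add_cancel hn] at this
    have h2 : ∑ i ∈ Finset.range (n - 1),
        (c (i + 1) - c i) * ∑ j ∈ Finset.range (i + 1), w j ≤ 0 := by
      apply Finset.sum_nonpos
      intro i hi
      rw [Finset.mem_range] at hi
      apply mul_nonpos_of_nonpos_of_nonneg
      · have := hcmono i (i + 1) (by omega) (by omega)
        linarith
      · exact hP i (by omega)
    calc (0:ℝ) ≤ c (n - 1) * ∑ i ∈ Finset.range n, w i -
          ∑ i ∈ Finset.range (n - 1),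
            (c (i + 1) - c i) * ∑ j ∈ Finset.range (i + 1), w j := by linarith
      _ = ∑ k ∈ Finset.range n, c k * w k := habel.symm
      _ = ∑ k ∈ Finset.range n, w k * c k := by
          apply Finset.sum_congr rfl; intro k _; ring
  have heq : ∑ k ∈ Finset.range n, w k * c k =
      ∑ k ∈ Finset.range n, w k * (a k + b k) ^ p -
        ∑ k ∈ Finset.range n, w k * (a k ^ p + b k ^ p) := by
    rw [← Finset.sum_sub_distrib]
    apply Finset.sum_congr rfl
    intro k _
    simp only [hc]
    ring
  linarith
end

section
/- Let p ≥ 1. For every ε > 0 there exist a positive integer n and non-negative non-increasing sequences (a_k)_{k=1}^n and (b_k)_{k=1}^n such that ∑_{k=1}^n (a_k + b_k)^p > 0 and (∑_{k=1}^n a_k^p)^{1/p} + (∑_{k=1}^n b_k^p)^{1/p} > (2^{1 − 1/p} − ε) · (∑_{k=1}^n (a_k + b_k)^p)^{1/p}. (Thus, with unit weights—which satisfy P_k ≥ 0 for all k—the constant 2^{1−1/p} in the Minkowski-type inequality is best possible.) -/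
open Finset Real

theorem stmt_9 (p : ℝ) (hp : 1 ≤ p) :
    ∀ ε > (0 : ℝ), ∃ (n : ℕ) (_ : 0 < n) (a b : ℕ → ℝ),
      (∀ k < n, 0 ≤ a k) ∧ (∀ k < n, 0 ≤ b k) ∧
      (∀ i j, i ≤ j → j < n → a j ≤ a i) ∧
      (∀ i j, i ≤ j → j < n → b j ≤ b i) ∧
      0 < ∑ k ∈ Finset.range n, (a k + b k) ^ p ∧
      (∑ k ∈ Finset.range n, a k ^ p) ^ (1 / p) +
        (∑ k ∈ Finset.range n, b k ^ p) ^ (1 / p) >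
      (2 ^ (1 - 1 / p) - ε) * (∑ k ∈ Finset.range n, (a k + b k) ^ p) ^ (1 / p) := by
  intro ε hε
  have hp0 : (0:ℝ) < p := lt_of_lt_of_le one_pos hp
  have hp0' : p ≠ 0 := ne_of_gt hp0
  have hip : (0:ℝ) < 1 / p := by positivity
  by_cases hc : 2 ^ (1 - 1 / p) - ε ≤ 0
  · -- trivial case: the constant is nonpositive
    refine ⟨1, one_pos, (fun _ => 1), (fun _ => 1), ?_, ?_, ?_, ?_, ?_, ?_⟩
    · intro k _; norm_num
    · intro k _; norm_num
    · intro i j _ _; exact le_refl (1:ℝ)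
    · intro i j _ _; exact le_refl 1
    · simp only [Finset.sum_range_one]
      positivity
    · have h1 : (0:ℝ) ≤ (∑ k ∈ Finset.range 1, ((1:ℝ) + 1) ^ p) ^ (1/p) := by
        apply Real.rpow_nonneg
        apply Finset.sum_nonneg
        intro k _
        positivity
      have h2 : (2 ^ (1 - 1 / p) - ε) * (∑ k ∈ Finset.range 1, ((1:ℝ) + 1) ^ p) ^ (1/p) ≤ 0 :=
        mul_nonpos_of_nonpos_of_nonneg hc h1
      have h3 : (0:ℝ) < (∑ k ∈ Finset.range 1, (1:ℝ) ^ p) ^ (1/p) +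
          (∑ k ∈ Finset.range 1, (1:ℝ) ^ p) ^ (1/p) := by
        simp only [Finset.sum_range_one, Real.one_rpow]
        norm_num
      exact lt_of_le_of_lt h2 h3
  · push_neg at hc
    set c : ℝ := 2 ^ (1 - 1 / p) - ε with hcdef
    set M : ℝ := 2 / c with hMdef
    have hc2 : c < 2 ^ (1 - 1/p) := by
      simp only [hcdef]; linarith
    have h2eq : (2:ℝ) ^ (1/p) * 2 ^ (1 - 1/p) = 2 := by
      rw [← Real.rpow_add (by norm_num : (0:ℝ) < 2)]
      norm_num
    have hM : 2 ^ (1/p) < M := by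
      rw [hMdef, lt_div_iff₀ hc]
      calc 2 ^ (1/p) * c < 2 ^ (1/p) * 2 ^ (1 - 1/p) :=
            mul_lt_mul_of_pos_left hc2 (Real.rpow_pos_of_pos two_pos _)
        _ = 2 := h2eq
    have hM0 : (0:ℝ) < M := lt_trans (Real.rpow_pos_of_pos (by norm_num) _) hM
    have hMp : (2:ℝ) < M ^ p := by
      have := Real.rpow_lt_rpow (Real.rpow_nonneg (by norm_num) _) hM hp0
      rwa [← Real.rpow_mul (by norm_num : (0:ℝ) ≤ 2), one_div_mul_cancel hp0',
        Real.rpow_one] at this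
    set t : ℝ := (M ^ p - 1) ^ (1/p) with htdef
    have ht1 : (1:ℝ) < t := by
      have h1 : (1:ℝ) < M ^ p - 1 := by linarith
      have := Real.rpow_lt_rpow (by norm_num) h1 hip
      rwa [Real.one_rpow] at this
    have htp : t ^ p = M ^ p - 1 := by
      rw [htdef, ← Real.rpow_mul (by linarith), one_div_mul_cancel hp0', Real.rpow_one]
    obtain ⟨N, hN⟩ := exists_nat_gt ((1 / (t - 1)) ^ p)
    have hNpos' : (0:ℝ) < (1 / (t - 1)) ^ p :=
      Real.rpow_pos_of_pos (one_div_pos.mpr (by linarith)) _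
    have hN0 : (0:ℝ) < N := lt_trans hNpos' hN
    have hNnat : 0 < N := by exact_mod_cast hN0
    set δ : ℝ := ((1:ℝ) / N) ^ (1/p) with hδdef
    have hδ0 : 0 < δ := Real.rpow_pos_of_pos (by positivity) _
    have hδp : δ ^ p = 1 / N := by
      rw [hδdef, ← Real.rpow_mul (by positivity), one_div_mul_cancel hp0', Real.rpow_one]
    have hδt : δ < t - 1 := by
      have h1 : 1 / ((t - 1) ^ p) < N := by
        rwa [one_div, Real.inv_rpow (by linarith), ← one_div] at hN
      have h2 : 1 / (N:ℝ) < (t - 1) ^ p := by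
        rw [div_lt_iff₀ hN0]
        rw [div_lt_iff₀ (Real.rpow_pos_of_pos (by linarith) p)] at h1
        linarith
      have := Real.rpow_lt_rpow (by positivity) h2 hip
      rw [← Real.rpow_mul (by linarith), mul_one_div_cancel hp0', Real.rpow_one] at this
      exact this
    -- the sums
    have hsa : ∑ k ∈ Finset.range N, (if k = 0 then (1:ℝ) else 0) ^ p = 1 := by
      rw [Finset.sum_eq_single 0]
      · simp [Real.one_rpow]
      · intro k _ hk; simp [hk, Real.zero_rpow hp0']
      · intro h; exact absurd (Finset.mem_range.mpr hNnat) h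
    have hsb : ∑ k ∈ Finset.range N, δ ^ p = 1 := by
      rw [Finset.sum_const, Finset.card_range, nsmul_eq_mul, hδp]
      field_simp
    have hsab : ∑ k ∈ Finset.range N, ((if k = 0 then (1:ℝ) else 0) + δ) ^ p
        = 1 + (1 + δ) ^ p - δ ^ p := by
      have h : ∀ k ∈ Finset.range N, ((if k = 0 then (1:ℝ) else 0) + δ) ^ p
          = δ ^ p + (if k = 0 then (1 + δ) ^ p - δ ^ p else 0) := by
        intro k _
        by_cases hk : k = 0 <;> simp [hk]
      rw [Finset.sum_congr rfl h, Finset.sum_add_distrib, hsb,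
        Finset.sum_eq_single 0]
      · simp; ring
      · intro k _ hk; simp [hk]
      · intro h'; exact absurd (Finset.mem_range.mpr hNnat) h'
    have hS1 : (1:ℝ) ≤ 1 + (1 + δ) ^ p - δ ^ p := by
      have : δ ^ p ≤ (1 + δ) ^ p := Real.rpow_le_rpow hδ0.le (by linarith) hp0.le
      linarith
    have hSlt : 1 + (1 + δ) ^ p - δ ^ p < M ^ p := by
      have h1 : (1 + δ) ^ p ≤ t ^ p :=
        Real.rpow_le_rpow (by linarith) (by linarith) hp0.le
      have h2 : 0 < δ ^ p := Real.rpow_pos_of_pos hδ0 _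
      rw [htp] at h1
      linarith
    have hroot : (1 + (1 + δ) ^ p - δ ^ p) ^ (1/p) < M := by
      have := Real.rpow_lt_rpow (by linarith) hSlt hip
      rwa [← Real.rpow_mul hM0.le, mul_one_div_cancel hp0', Real.rpow_one] at this
    have hcM : c * M = 2 := by
      rw [hMdef]; field_simp
    have hfin : c * (1 + (1 + δ) ^ p - δ ^ p) ^ (1/p) < 2 := by
      calc c * (1 + (1 + δ) ^ p - δ ^ p) ^ (1/p) < c * M :=
            (mul_lt_mul_iff_right₀ hc).mpr hroot
        _ = 2 := hcM
    refine ⟨N, hNnat, (fun k => if k = 0 then 1 else 0), (fun _ => δ), ?_, ?_, ?_, ?_, ?_, ?_⟩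
    · intro k _; dsimp only; split <;> norm_num
    · intro k _; exact hδ0.le
    · intro i j hij _
      dsimp only
      by_cases hj : j = 0
      · subst hj
        simp [Nat.le_zero.mp hij]
      · rw [if_neg hj]
        split <;> norm_num
    · intro i j _ _; exact le_refl δ
    · rw [hsab]; linarith
    · rw [hsa, hsb, hsab, Real.one_rpow]
      linarith [hfin]
end

section
/- Let p > 1. For every ε > 0 there exist a positive integer n, real weights p_1,…,p_n with P_k ≥ 0 for all k = 1,…,n, and non-negative non-increasing sequences (a_k)_{k=1}^n and (b_k)_{k=1}^n such that ∑_{k=1}^n p_k (a_k + b_k)^p > 0 and (∑_{k=1}^n p_k a_k^p)^{1/p} + (∑_{k=1}^n p_k b_k^p)^{1/p} < ε · (∑_{k=1}^n p_k (a_k + b_k)^p)^{1/p}. (Hence no positive constant depending only on p bounds the Minkowski-type ratio from below.) -/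
open Finset Real

theorem stmt_11 (p : ℝ) (hp : 1 < p) :
    ∀ ε > (0 : ℝ), ∃ (n : ℕ) (_ : 0 < n) (w a b : ℕ → ℝ),
      (∀ k < n, 0 ≤ ∑ i ∈ Finset.range (k + 1), w i) ∧
      (∀ k < n, 0 ≤ a k) ∧ (∀ k < n, 0 ≤ b k) ∧
      (∀ i j, i ≤ j → j < n → a j ≤ a i) ∧
      (∀ i j, i ≤ j → j < n → b j ≤ b i) ∧
      0 < ∑ k ∈ Finset.range n, w k * (a k + b k) ^ p ∧
      (∑ k ∈ Finset.range n, w k * a k ^ p) ^ (1 / p) +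
        (∑ k ∈ Finset.range n, w k * b k ^ p) ^ (1 / p) <
      ε * (∑ k ∈ Finset.range n, w k * (a k + b k) ^ p) ^ (1 / p) := by
  intro ε hε
  have hp0 : (0 : ℝ) < p := lt_trans one_pos hp
  have hp0' : p ≠ 0 := ne_of_gt hp0
  have hp1 : p - 1 ≠ 0 := sub_ne_zero.mpr (ne_of_gt hp)
  set C : ℝ := (2 / ε) ^ p with hC
  have hCpos : 0 < C := Real.rpow_pos_of_pos (by positivity) p
  set W : ℝ := C ^ (p / (p - 1)) with hWdef
  have hWpos : 0 < W := Real.rpow_pos_of_pos hCpos _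
  set t : ℝ := W ^ (-(1 / p)) with htdef
  have htpos : 0 < t := Real.rpow_pos_of_pos hWpos _
  -- key algebraic facts
  have htp : t ^ p = 1 / W := by
    rw [htdef, ← Real.rpow_mul hWpos.le, show -(1 / p) * p = -1 by field_simp,
      Real.rpow_neg_one, one_div]
  have hWt : W * t = C := by
    rw [htdef]
    nth_rewrite 1 [← Real.rpow_one W]
    rw [← Real.rpow_add hWpos, hWdef, ← Real.rpow_mul hCpos.le]
    rw [show p / (p - 1) * (1 + -(1 / p)) = 1 by field_simp; ring]
    rw [Real.rpow_one]
  refine ⟨2, by norm_num, (fun k => if k = 0 then W else 1 - W),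
    (fun _ => 1), (fun k => if k = 0 then t else 0), ?_, ?_, ?_, ?_, ?_, ?_, ?_⟩
  · intro k hk
    interval_cases k <;> simp [Finset.sum_range_succ] <;> linarith
  · intro k _; norm_num
  · intro k hk
    interval_cases k <;> simp [htpos.le]
  · intro i j _ _; exact le_refl _
  · intro i j hij hj
    interval_cases j <;> interval_cases i <;> simp [htpos.le]
  all_goals
    have hBern : 1 + p * t ≤ (1 + t) ^ p :=
      one_add_mul_self_le_rpow_one_add (by linarith) hp.le
    have hS : C < W * (1 + t) ^ p + (1 - W) := by
      have h1 : W * (1 + p * t) ≤ W * (1 + t) ^ p :=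
        mul_le_mul_of_nonneg_left hBern hWpos.le
      nlinarith [hWt, hCpos, hp]
    have hSpos : 0 < W * (1 + t) ^ p + (1 - W) := lt_trans hCpos hS
    have hsab : ∑ k ∈ Finset.range 2, (fun k => if k = 0 then W else 1 - W) k *
        ((fun _ => (1:ℝ)) k + (fun k => if k = 0 then t else 0) k) ^ p
        = W * (1 + t) ^ p + (1 - W) := by
      simp [Finset.sum_range_succ, Real.one_rpow]
  · rw [hsab]; exact hSpos
  · have hsa : ∑ k ∈ Finset.range 2, (fun k => if k = 0 then W else 1 - W) k *
        ((fun _ => (1:ℝ)) k) ^ p = 1 := by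
      simp [Finset.sum_range_succ, Real.one_rpow]
    have hsb : ∑ k ∈ Finset.range 2, (fun k => if k = 0 then W else 1 - W) k *
        ((fun k => if k = 0 then t else 0) k) ^ p = 1 := by
      simp [Finset.sum_range_succ, Real.zero_rpow hp0', htp]
      field_simp
    rw [hsa, hsb, hsab, Real.one_rpow]
    have h2 : (2 : ℝ) / ε < (W * (1 + t) ^ p + (1 - W)) ^ (1 / p) := by
      calc (2 : ℝ) / ε = C ^ (1 / p) := by
             rw [hC, ← Real.rpow_mul (by positivity), mul_one_div,
               div_self hp0', Real.rpow_one]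
        _ < _ := Real.rpow_lt_rpow hCpos.le hS (by positivity)
    calc (1 : ℝ) + 1 = ε * (2 / ε) := by field_simp; norm_num
      _ < _ := mul_lt_mul_of_pos_left h2 hε
end

section
/- Let m be a positive integer, let p ≥ 1, and let b_1 ≥ b_2 ≥ ⋯ ≥ b_{2m} > 0 be a positive non-increasing sequence. Then ∑_{k=1}^{2m} (−1)^{k+1} b_k^p ≥ p · b_{2m}^{p−1} · ∑_{k=1}^{2m} (−1)^{k+1} b_k. -/
open Finset Real

lemma pair_ineq {p c x y : ℝ} (hp : 1 ≤ p) (hc : 0 < c) (hcy : c ≤ y) (hyx : y ≤ x) :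
    p * c ^ (p - 1) * (x - y) ≤ x ^ p - y ^ p := by
  have hy : 0 < y := hc.trans_le hcy
  have hx : 0 < x := hy.trans_le hyx
  have hs : (0 : ℝ) ≤ (x - y) / y := div_nonneg (by linarith) hy.le
  have h1 : 1 + p * ((x - y) / y) ≤ (1 + (x - y) / y) ^ p :=
    one_add_mul_self_le_rpow_one_add (by linarith) hp
  have h2 : 1 + (x - y) / y = x / y := by field_simp; ring
  rw [h2, Real.div_rpow hx.le hy.le] at h1
  have hyp : 0 < y ^ p := Real.rpow_pos_of_pos hy p
  have h3 : (1 + p * ((x - y) / y)) * y ^ p ≤ x ^ p := by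
    rw [← le_div_iff₀ hyp]; exact h1
  have h4 : y ^ p / y = y ^ (p - 1) := by
    rw [← Real.rpow_sub_one hy.ne']
  have h5 : (1 + p * ((x - y) / y)) * y ^ p = y ^ p + p * (x - y) * y ^ (p - 1) := by
    rw [← h4]; field_simp
  rw [h5] at h3
  have h6 : c ^ (p - 1) ≤ y ^ (p - 1) :=
    Real.rpow_le_rpow hc.le hcy (by linarith)
  have hp0 : (0 : ℝ) ≤ p := by linarith
  nlinarith [mul_le_mul_of_nonneg_left h6 (mul_nonneg hp0 (by linarith : (0:ℝ) ≤ x - y))]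

lemma aux_sum (p c : ℝ) (hp : 1 ≤ p) (hc : 0 < c) (b : ℕ → ℝ) :
    ∀ n : ℕ, (∀ k < 2 * n, c ≤ b k) → (∀ i j, i ≤ j → j < 2 * n → b j ≤ b i) →
      p * c ^ (p - 1) * ∑ k ∈ Finset.range (2 * n), (-1 : ℝ) ^ k * b k ≤
        ∑ k ∈ Finset.range (2 * n), (-1 : ℝ) ^ k * b k ^ p := by
  intro n
  induction n with
  | zero => simp
  | succ n ih =>
    intro hcb hmono
    have h2 : 2 * (n + 1) = 2 * n + 1 + 1 := by ring
    rw [h2, Finset.sum_range_succ, Finset.sum_range_succ,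
        Finset.sum_range_succ, Finset.sum_range_succ]
    have hsgn : ((-1 : ℝ)) ^ (2 * n) = 1 := by
      simp [pow_mul]
    have hsgn' : ((-1 : ℝ)) ^ (2 * n + 1) = -1 := by
      rw [pow_succ, hsgn]; ring
    rw [hsgn, hsgn']
    have ihh := ih (fun k hk => hcb k (by omega)) (fun i j hij hj => hmono i j hij (by omega))
    have hpair : p * c ^ (p - 1) * (b (2 * n) - b (2 * n + 1)) ≤
        b (2 * n) ^ p - b (2 * n + 1) ^ p :=
      pair_ineq hp hc (hcb (2 * n + 1) (by omega)) (hmono (2 * n) (2 * n + 1) (by omega) (by omega))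
    nlinarith [ihh, hpair]

theorem stmt_12 (m : ℕ) (hm : 0 < m) (p : ℝ) (hp : 1 ≤ p) (b : ℕ → ℝ)
    (hpos : ∀ k < 2 * m, 0 < b k)
    (hmono : ∀ i j, i ≤ j → j < 2 * m → b j ≤ b i) :
    ∑ k ∈ Finset.range (2 * m), (-1 : ℝ) ^ k * b k ^ p ≥
      p * b (2 * m - 1) ^ (p - 1) * ∑ k ∈ Finset.range (2 * m), (-1 : ℝ) ^ k * b k := by
  have hlt : 2 * m - 1 < 2 * m := by omega
  have hc : 0 < b (2 * m - 1) := hpos _ hlt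
  exact aux_sum p (b (2 * m - 1)) hp hc b m
    (fun k hk => hmono k (2 * m - 1) (by omega) hlt) hmono
end

section
/- Let p > 1. For every C > 0 there exist a positive integer m and a positive non-increasing sequence b_1 ≥ b_2 ≥ ⋯ ≥ b_{2m} > 0 such that ∑_{k=1}^{2m} (−1)^{k+1} b_k > 0 and (∑_{k=1}^{2m} (−1)^{k+1} b_k^p)^{1/p} > C · ∑_{k=1}^{2m} (−1)^{k+1} b_k. (Hence, for the alternating weights p_k = (−1)^{k+1}, the constant in the reverse Hölder-type inequality necessarily tends to infinity as the lower bound of the sequence tends to 0.) -/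
open Finset Real

theorem stmt_13 (p : ℝ) (hp : 1 < p) :
    ∀ C > (0 : ℝ), ∃ (m : ℕ) (_ : 0 < m) (b : ℕ → ℝ),
      (∀ k < 2 * m, 0 < b k) ∧
      (∀ i j, i ≤ j → j < 2 * m → b j ≤ b i) ∧
      0 < ∑ k ∈ Finset.range (2 * m), (-1 : ℝ) ^ k * b k ∧
      (∑ k ∈ Finset.range (2 * m), (-1 : ℝ) ^ k * b k ^ p) ^ (1 / p) >
        C * ∑ k ∈ Finset.range (2 * m), (-1 : ℝ) ^ k * b k := by
  intro C hC
  have hp0 : (0:ℝ) < p := by linarith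
  have hp1 : (0:ℝ) < p - 1 := by linarith
  set δ : ℝ := min (1/2) (1/(2*C)) with hδdef
  have hδ0 : 0 < δ := lt_min (by norm_num) (by positivity)
  have hδ12 : δ ≤ 1/2 := min_le_left _ _
  have hδC : δ ≤ 1/(2*C) := min_le_right _ _
  have hδ1 : δ ≤ 1 := hδ12.trans (by norm_num)
  set q : ℝ := p / (p - 1) with hqdef
  have hq1 : 1 ≤ q := by
    rw [hqdef, le_div_iff₀ hp1]; linarith
  set ε : ℝ := δ ^ q with hεdef
  have hε0 : 0 < ε := Real.rpow_pos_of_pos hδ0 _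
  have hε12 : ε ≤ 1/2 := by
    calc ε ≤ δ ^ (1:ℝ) := Real.rpow_le_rpow_of_exponent_ge hδ0 hδ1 hq1
    _ = δ := Real.rpow_one δ
    _ ≤ 1/2 := hδ12
  -- key inequality: ε^(1/p) > C * ε
  have hεp : ε ^ (1/p) = δ ^ (1/(p-1)) := by
    rw [hεdef, ← Real.rpow_mul hδ0.le]
    congr 1
    rw [hqdef]
    field_simp
  have hεsplit : ε = δ * δ ^ (1/(p-1)) := by
    rw [hεdef]
    have : q = 1 + 1/(p-1) := by rw [hqdef]; field_simp; ring
    rw [this, Real.rpow_add hδ0, Real.rpow_one]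
  have hCδ : C * δ ≤ 1/2 := by
    have := mul_le_mul_of_nonneg_left hδC hC.le
    calc C * δ ≤ C * (1/(2*C)) := this
    _ = 1/2 := by field_simp
  have hkey : ε ^ (1/p) > C * ε := by
    rw [hεp, hεsplit]
    have hd : 0 < δ ^ (1/(p-1)) := Real.rpow_pos_of_pos hδ0 _
    calc C * (δ * δ ^ (1/(p-1))) = (C * δ) * δ ^ (1/(p-1)) := by ring
    _ ≤ (1/2) * δ ^ (1/(p-1)) := by
        exact mul_le_mul_of_nonneg_right hCδ hd.le
    _ < δ ^ (1/(p-1)) := by linarith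
  refine ⟨1, one_pos, fun k => if k = 0 then 1 else 1 - ε, ?_, ?_, ?_, ?_⟩
  · intro k hk
    by_cases h : k = 0 <;> simp [h] <;> linarith
  · intro i j hij hj
    by_cases hi : i = 0
    · by_cases hjj : j = 0 <;> simp [hi, hjj] <;> linarith
    · have hjj : j ≠ 0 := by omega
      simp [hi, hjj]
  · simp [Finset.sum_range_succ]
    linarith
  · have h1ε : (0:ℝ) < 1 - ε := by linarith
    have hsum1 : ∑ k ∈ Finset.range (2 * 1), (-1 : ℝ) ^ k *
        (if k = 0 then (1:ℝ) else 1 - ε) = ε := by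
      simp [Finset.sum_range_succ]
    have hsum2 : ∑ k ∈ Finset.range (2 * 1), (-1 : ℝ) ^ k *
        (if k = 0 then (1:ℝ) else 1 - ε) ^ p = 1 - (1 - ε) ^ p := by
      simp [Finset.sum_range_succ, Real.one_rpow]
      ring
    rw [hsum1, hsum2]
    have hmono : ε ≤ 1 - (1 - ε) ^ p := by
      have : (1 - ε) ^ p ≤ (1 - ε) ^ (1:ℝ) :=
        Real.rpow_le_rpow_of_exponent_ge h1ε (by linarith) hp.le
      rw [Real.rpow_one] at this
      linarith
    have : ε ^ (1/p) ≤ (1 - (1 - ε) ^ p) ^ (1/p) :=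
      Real.rpow_le_rpow hε0.le hmono (by positivity)
    linarith
end

section
/- Let α < β be real numbers, let w : ℝ → ℝ be integrable on [α, β], and set P(x) := ∫_α^x w(t) dt. Let f be a non-negative, non-increasing, differentiable function on [α, β], let g be a non-negative, non-decreasing, differentiable function on [α, β] with g(x) ≤ B for all x ∈ [α, β], and assume P(x) ≥ 0 for all x ∈ [α, β]. Assume f·g·w and f·w are integrable on [α, β]. Then ∫_α^β f(x) g(x) w(x) dx ≤ B · ∫_α^β f(x) w(x) dx. -/
open Real MeasureTheory intervalIntegral
open Filter Set Topology

lemma aux_slope {h : ℝ → ℝ} {a b t : ℝ} (ht : t ∈ Set.Ioo a b)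
    (hd : HasDerivAt h (deriv h t) t) (hanti : AntitoneOn h (Set.Icc a b)) :
    deriv h t ≤ 0 := by
  have hslope : Filter.Tendsto (slope h t) (𝓝[Set.Ioi t \ {t}] t) (𝓝 (deriv h t)) :=
    (hasDerivWithinAt_iff_tendsto_slope.1 hd.hasDerivWithinAt)
  have hset : Set.Ioi t \ {t} = Set.Ioi t := by
    ext y
    simp only [Set.mem_diff, Set.mem_Ioi, Set.mem_singleton_iff, and_iff_left_iff_imp]
    intro hy; exact (ne_of_gt hy)
  rw [hset] at hslope
  refine le_of_tendsto hslope ?_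
  have hmem : Set.Ioo t b ∈ 𝓝[Set.Ioi t] t := Ioo_mem_nhdsGT_of_mem ⟨le_rfl, ht.2⟩
  filter_upwards [hmem] with y hy
  have hyt : t < y := hy.1
  have h1 : h y ≤ h t := hanti ⟨ht.1.le, ht.2.le⟩ ⟨(ht.1.trans hyt).le, hy.2.le⟩ hyt.le
  rw [slope_def_field]
  exact div_nonpos_of_nonpos_of_nonneg (by linarith) (by linarith)

lemma aux_main (a b : ℝ) (hab : a < b) (w h : ℝ → ℝ)
    (hw : IntervalIntegrable w volume a b)
    (hP : ∀ x ∈ Set.Icc a b, 0 ≤ ∫ t in a..x, w t)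
    (hhcont : ContinuousOn h (Set.Icc a b))
    (hhdiff : ∀ x ∈ Set.Ioo a b, HasDerivAt h (deriv h x) x)
    (hhanti : AntitoneOn h (Set.Icc a b))
    (hhb : 0 ≤ h b)
    (hhw : IntervalIntegrable (fun x => h x * w x) volume a b) :
    0 ≤ ∫ x in a..b, h x * w x := by
  set φ : ℝ → ℝ := fun t => -deriv h t with hφdef
  have hφ0 : ∀ t ∈ Set.Ioo a b, 0 ≤ φ t := fun t ht => by
    simpa [hφdef] using aux_slope ht (hhdiff t ht) hhanti
  -- φ is interval integrable
  have hφint : IntervalIntegrable φ volume a b := by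
    apply intervalIntegrable_deriv_of_nonneg (g := fun x => -h x)
    · rw [Set.uIcc_of_le hab.le]; exact hhcont.neg
    · intro x hx
      rw [min_eq_left hab.le, max_eq_right hab.le] at hx
      exact (hhdiff x hx).neg
    · intro x hx
      rw [min_eq_left hab.le, max_eq_right hab.le] at hx
      exact hφ0 x hx
  have hderint : IntervalIntegrable (deriv h) volume a b := by
    have h1 := hφint.neg
    have e : (-φ) = deriv h := by funext t; simp [hφdef]
    rwa [e] at h1
  -- FTC
  have FTC : ∀ x ∈ Set.Icc a b, h x - h b = ∫ t in Set.Ioc x b, φ t := by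
    intro x hx
    have hxb : x ≤ b := hx.2
    have h1 : ∫ t in x..b, deriv h t = h b - h x := by
      apply intervalIntegral.integral_eq_sub_of_hasDeriv_right
      · refine hhcont.mono ?_
        rw [Set.uIcc_of_le hxb]
        exact Set.Icc_subset_Icc hx.1 le_rfl
      · intro t ht
        rw [min_eq_left hxb, max_eq_right hxb] at ht
        exact (hhdiff t ⟨lt_of_le_of_lt hx.1 ht.1, ht.2⟩).hasDerivWithinAt
      · refine hderint.mono_set ?_
        rw [Set.uIcc_of_le hxb, Set.uIcc_of_le hab.le]
        exact Set.Icc_subset_Icc hx.1 le_rfl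
    rw [intervalIntegral.integral_of_le hxb] at h1
    have : ∫ t in Set.Ioc x b, φ t = -∫ t in Set.Ioc x b, deriv h t := by
      simp [hφdef, MeasureTheory.integral_neg]
    rw [this, h1]; ring
  -- integrability facts on Ioc
  have hwi : IntegrableOn w (Set.Ioc a b) := hw.1
  have hφi : IntegrableOn φ (Set.Ioc a b) := hφint.1
  have hhwi : IntegrableOn (fun x => h x * w x) (Set.Ioc a b) := hhw.1
  set μ := volume.restrict (Set.Ioc a b) with hμdef
  -- the product function
  set F : ℝ × ℝ → ℝ :=
    Set.indicator {q : ℝ × ℝ | q.1 < q.2} (fun q => w q.1 * φ q.2) with hFdef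
  have hFi : Integrable F (μ.prod μ) := by
    have h1 : Integrable (fun q : ℝ × ℝ => w q.1 * φ q.2) (μ.prod μ) :=
      Integrable.mul_prod hwi hφi
    exact h1.indicator (measurableSet_lt measurable_fst measurable_snd)
  have hswap : (∫ x, ∫ t, F (x, t) ∂μ ∂μ) = ∫ t, ∫ x, F (x, t) ∂μ ∂μ :=
    MeasureTheory.integral_integral_swap (by exact hFi)
  -- inner integral in t
  have hinner1 : ∀ x ∈ Set.Ioc a b, (∫ t, F (x, t) ∂μ) = w x * (h x - h b) := by
    intro x hx
    have hker : ∀ t, F (x, t) = Set.indicator (Set.Ioi x) (fun t => w x * φ t) t := by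
      intro t
      by_cases hxt : x < t <;> simp [hFdef, Set.indicator, hxt]
    calc (∫ t, F (x, t) ∂μ) = ∫ t, Set.indicator (Set.Ioi x) (fun t => w x * φ t) t ∂μ := by
          simp only [hker]
      _ = ∫ t in Set.Ioi x, w x * φ t ∂μ := MeasureTheory.integral_indicator measurableSet_Ioi
      _ = ∫ t in Set.Ioc x b, w x * φ t := by
          have hseteq : Set.Ioi x ∩ Set.Ioc a b = Set.Ioc x b := by
            ext t
            simp only [Set.mem_inter_iff, Set.mem_Ioi, Set.mem_Ioc]
            constructor
            · rintro ⟨h1, _, h3⟩; exact ⟨h1, h3⟩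
            · rintro ⟨h1, h2⟩; exact ⟨h1, hx.1.trans h1, h2⟩
          rw [hμdef, Measure.restrict_restrict measurableSet_Ioi, hseteq]
      _ = w x * ∫ t in Set.Ioc x b, φ t := by rw [MeasureTheory.integral_const_mul]
      _ = w x * (h x - h b) := by rw [← FTC x ⟨hx.1.le, hx.2⟩]
  -- inner integral in x
  have hinner2 : ∀ t ∈ Set.Ioc a b, (∫ x, F (x, t) ∂μ) = φ t * ∫ x in Set.Ioc a t, w x := by
    intro t ht
    have hker : ∀ x, F (x, t) = Set.indicator (Set.Iio t) (fun x => w x * φ t) x := by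
      intro x
      by_cases hxt : x < t <;> simp [hFdef, Set.indicator, hxt]
    calc (∫ x, F (x, t) ∂μ) = ∫ x, Set.indicator (Set.Iio t) (fun x => w x * φ t) x ∂μ := by
          simp only [hker]
      _ = ∫ x in Set.Iio t, w x * φ t ∂μ := MeasureTheory.integral_indicator measurableSet_Iio
      _ = ∫ x in Set.Ioo a t, w x * φ t := by
          have hseteq : Set.Iio t ∩ Set.Ioc a b = Set.Ioo a t := by
            ext x
            simp only [Set.mem_inter_iff, Set.mem_Iio, Set.mem_Ioc, Set.mem_Ioo]
            constructor
            · rintro ⟨h1, h2, _⟩; exact ⟨h2, h1⟩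
            · rintro ⟨h1, h2⟩; exact ⟨h2, h1, (le_of_lt h2).trans ht.2⟩
          rw [hμdef, Measure.restrict_restrict measurableSet_Iio, hseteq]
      _ = (∫ x in Set.Ioo a t, w x) * φ t := by rw [MeasureTheory.integral_mul_const]
      _ = φ t * ∫ x in Set.Ioc a t, w x := by
          rw [MeasureTheory.integral_Ioc_eq_integral_Ioo]; ring
  -- assemble
  have hPp : ∀ t ∈ Set.Icc a b, 0 ≤ ∫ x in Set.Ioc a t, w x := by
    intro t ht
    have := hP t ht
    rwa [intervalIntegral.integral_of_le ht.1] at this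
  have hL : (∫ x, ∫ t, F (x, t) ∂μ ∂μ) = ∫ x in Set.Ioc a b, w x * (h x - h b) :=
    MeasureTheory.setIntegral_congr_fun measurableSet_Ioc (fun x hx => hinner1 x hx)
  have hRnn : 0 ≤ ∫ t, ∫ x, F (x, t) ∂μ ∂μ := by
    apply MeasureTheory.setIntegral_nonneg_ae measurableSet_Ioc
    have hbne : ∀ᵐ t : ℝ, t ≠ b := by
      have : (volume : Measure ℝ) {b} = 0 := measure_singleton b
      exact ae_iff.2 (by simpa using this)
    filter_upwards [hbne] with t htb ht
    rw [hinner2 t ht]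
    have htIoo : t ∈ Set.Ioo a b := ⟨ht.1, lt_of_le_of_ne ht.2 htb⟩
    exact mul_nonneg (hφ0 t htIoo) (hPp t ⟨ht.1.le, ht.2⟩)
  -- final computation
  have hsub : (∫ x in Set.Ioc a b, w x * (h x - h b)) =
      (∫ x in Set.Ioc a b, h x * w x) - h b * ∫ x in Set.Ioc a b, w x := by
    have e : ∀ x, w x * (h x - h b) = h x * w x - h b * w x := fun x => by ring
    simp only [e]
    rw [MeasureTheory.integral_sub hhwi (hwi.const_mul (h b)),
      MeasureTheory.integral_const_mul]
  have hPb : 0 ≤ ∫ x in Set.Ioc a b, w x := hPp b ⟨hab.le, le_rfl⟩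
  rw [intervalIntegral.integral_of_le hab.le]
  have := hswap
  rw [hL] at this
  have h2 : (∫ x in Set.Ioc a b, h x * w x) =
      h b * (∫ x in Set.Ioc a b, w x) + ∫ t, ∫ x, F (x, t) ∂μ ∂μ := by
    rw [← this, hsub]; ring
  rw [h2]
  have := mul_nonneg hhb hPb
  linarith

theorem stmt_14 (α β B : ℝ) (hab : α < β) (w f g : ℝ → ℝ)
    (hw : IntervalIntegrable w volume α β)
    (hP : ∀ x ∈ Set.Icc α β, 0 ≤ ∫ t in α..x, w t)
    (hf0 : ∀ x ∈ Set.Icc α β, 0 ≤ f x)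
    (hf : AntitoneOn f (Set.Icc α β))
    (hfdiff : DifferentiableOn ℝ f (Set.Icc α β))
    (hg0 : ∀ x ∈ Set.Icc α β, 0 ≤ g x)
    (hg : MonotoneOn g (Set.Icc α β))
    (hgdiff : DifferentiableOn ℝ g (Set.Icc α β))
    (hgB : ∀ x ∈ Set.Icc α β, g x ≤ B)
    (hfgw : IntervalIntegrable (fun x => f x * g x * w x) volume α β)
    (hfw : IntervalIntegrable (fun x => f x * w x) volume α β) :
    (∫ x in α..β, f x * g x * w x) ≤ B * ∫ x in α..β, f x * w x := by
  set h : ℝ → ℝ := fun x => f x * (B - g x) with hhdef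
  have hsub : Set.Ioo α β ⊆ Set.Icc α β := Set.Ioo_subset_Icc_self
  have hhdiff : ∀ x ∈ Set.Ioo α β, HasDerivAt h (deriv h x) x := by
    intro x hx
    have hn : Set.Icc α β ∈ 𝓝 x := Icc_mem_nhds hx.1 hx.2
    have h1 : DifferentiableAt ℝ f x := (hfdiff x (hsub hx)).differentiableAt hn
    have h2 : DifferentiableAt ℝ g x := (hgdiff x (hsub hx)).differentiableAt hn
    exact (h1.mul ((differentiableAt_const B).sub h2)).hasDerivAt
  have hhcont : ContinuousOn h (Set.Icc α β) :=
    hfdiff.continuousOn.mul (continuousOn_const.sub hgdiff.continuousOn)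
  have hhanti : AntitoneOn h (Set.Icc α β) := by
    intro x hx y hy hxy
    have h1 : f y * (B - g y) ≤ f y * (B - g x) :=
      mul_le_mul_of_nonneg_left (by linarith [hg hx hy hxy]) (hf0 y hy)
    have h2 : f y * (B - g x) ≤ f x * (B - g x) :=
      mul_le_mul_of_nonneg_right (hf hx hy hxy) (by linarith [hgB x hx])
    simpa [hhdef] using h1.trans h2
  have hhb : 0 ≤ h β := mul_nonneg (hf0 β ⟨hab.le, le_rfl⟩)
    (by linarith [hgB β ⟨hab.le, le_rfl⟩])
  have hhw : IntervalIntegrable (fun x => h x * w x) volume α β := by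
    have h1 := (hfw.const_mul B).sub hfgw
    have e : (fun x => B * (f x * w x) - f x * g x * w x) = fun x => h x * w x := by
      funext x; simp only [hhdef]; ring
    rwa [e] at h1
  have key := aux_main α β hab w h hw hP hhcont hhdiff hhanti hhb hhw
  have e2 : (∫ x in α..β, h x * w x) =
      B * (∫ x in α..β, f x * w x) - ∫ x in α..β, f x * g x * w x := by
    have e : (fun x => h x * w x) = fun x => B * (f x * w x) - f x * g x * w x := by
      funext x; simp only [hhdef]; ring
    rw [e, intervalIntegral.integral_sub (hfw.const_mul B) hfgw,
      intervalIntegral.integral_const_mul]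
  linarith [e2 ▸ key]
end

section
/- Let α < β be real numbers, let w : ℝ → ℝ be integrable on [α, β], and set P(x) := ∫_α^x w(t) dt, with P(x) ≥ 0 for all x ∈ [α, β]. Let f and g be non-increasing differentiable functions on [α, β] with 0 < a ≤ f(x) ≤ A < ∞ and 0 < b ≤ g(x) ≤ B < ∞ for all x ∈ [α, β], and let p, q > 1 satisfy 1/p + 1/q = 1. Assume the functions f^q·w, g^p·w, and f·g·w are integrable on [α, β]. Then (∫_α^β f(x)^q w(x) dx)^{1/q} · (∫_α^β g(x)^p w(x) dx)^{1/p} ≤ (pA/a)^{1/p} · (qB/b)^{1/q} · ∫_α^β f(x) g(x) w(x) dx. (Here the integrals ∫ f^q w and ∫ g^p w are non-negative, so the real powers are well defined.) -/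
open Real MeasureTheory intervalIntegral

section Aux
open Set

lemma key_steffensen (α β : ℝ) (hab : α < β) (w h : ℝ → ℝ)
    (hw : IntervalIntegrable w volume α β)
    (hP : ∀ x ∈ Set.Icc α β, 0 ≤ ∫ t in α..x, w t)
    (hh : AntitoneOn h (Set.Icc α β))
    (hpos : ∀ x ∈ Set.Icc α β, 0 ≤ h x) :
    0 ≤ ∫ x in α..β, h x * w x := by
  -- extend h to an antitone function on ℝ
  set h' : ℝ → ℝ := fun x => h (max α (min x β)) with hh'def
  have hproj : ∀ x : ℝ, max α (min x β) ∈ Set.Icc α β := by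
    intro x
    constructor
    · exact le_max_left _ _
    · exact max_le hab.le (min_le_right _ _)
  have hanti : Antitone h' := by
    intro x y hxy
    exact hh (hproj x) (hproj y) (max_le_max le_rfl (min_le_min hxy le_rfl))
  have h'nonneg : ∀ x, 0 ≤ h' x := fun x => hpos _ (hproj x)
  have h'eq : ∀ x ∈ Set.Icc α β, h' x = h x := by
    intro x hx
    simp only [hh'def]
    rw [min_eq_left hx.2, max_eq_right hx.1]
  have h'le : ∀ x, h' x ≤ h α := by
    intro x
    exact hh (left_mem_Icc.2 hab.le) (hproj x) (le_max_left _ _)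
  set M : ℝ := h α with hM
  have h'meas : Measurable h' := hanti.measurable
  set μ : Measure ℝ := volume.restrict (Set.Ioc α β) with hμ
  have hwint : IntegrableOn w (Set.Ioc α β) := hw.1
  -- rewrite the interval integral
  rw [intervalIntegral.integral_of_le hab.le]
  have congr1 : ∫ x in Set.Ioc α β, h x * w x = ∫ x in Set.Ioc α β, h' x * w x := by
    apply setIntegral_congr_fun measurableSet_Ioc
    intro x hx
    dsimp only
    rw [h'eq x (Set.Ioc_subset_Icc_self hx)]
  rw [congr1]
  -- layer cake function
  set F : ℝ → ℝ → ℝ := fun x t => w x * Set.indicator (Set.Ioo 0 (h' x)) (fun _ => (1:ℝ)) t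
    with hF
  have hFx : ∀ x, ∫ t, F x t = h' x * w x := by
    intro x
    have : (fun t => F x t) = Set.indicator (Set.Ioo 0 (h' x)) (fun _ => w x) := by
      funext t
      by_cases ht : t ∈ Set.Ioo 0 (h' x) <;> simp [hF, ht]
    rw [this, MeasureTheory.integral_indicator measurableSet_Ioo]
    simp [Real.volume_Ioo, ENNReal.toReal_ofReal (h'nonneg x), mul_comm, h'nonneg x]
  have Smeas : MeasurableSet {z : ℝ × ℝ | 0 < z.2 ∧ z.2 < h' z.1} := by
    apply MeasurableSet.inter
    · exact measurableSet_lt measurable_const measurable_snd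
    · exact measurableSet_lt measurable_snd (h'meas.comp measurable_fst)
  have hFmeas : AEStronglyMeasurable (Function.uncurry F) (μ.prod volume) := by
    have hw' : AEStronglyMeasurable (fun z : ℝ × ℝ => w z.1) (μ.prod volume) :=
      hwint.aestronglyMeasurable.comp_fst
    have hind : AEStronglyMeasurable
        (fun z : ℝ × ℝ => Set.indicator {z : ℝ × ℝ | 0 < z.2 ∧ z.2 < h' z.1}
          (fun _ => (1:ℝ)) z) (μ.prod volume) :=
      ((measurable_const.indicator Smeas).stronglyMeasurable).aestronglyMeasurable
    have : Function.uncurry F = fun z : ℝ × ℝ => w z.1 *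
        Set.indicator {z : ℝ × ℝ | 0 < z.2 ∧ z.2 < h' z.1} (fun _ => (1:ℝ)) z := by
      funext z
      simp only [Function.uncurry, hF]
      by_cases hz : z.2 ∈ Set.Ioo 0 (h' z.1)
      · rw [Set.indicator_of_mem hz, Set.indicator_of_mem (by exact hz)]
      · rw [Set.indicator_of_notMem hz, Set.indicator_of_notMem (by exact hz)]
    rw [this]
    exact hw'.mul hind
  have hFint : Integrable (Function.uncurry F) (μ.prod volume) := by
    apply Integrable.mono' (g := fun z : ℝ × ℝ => |w z.1| *
      Set.indicator (Set.Ioo 0 M) (fun _ => (1:ℝ)) z.2)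
    · exact (Integrable.abs hwint).mul_prod (integrable_indicator_iff measurableSet_Ioo |>.2
        (by simp [integrableOn_const, Real.volume_Ioo]))
    · exact hFmeas
    · filter_upwards with z
      simp only [Function.uncurry, hF, norm_mul, Real.norm_eq_abs]
      apply mul_le_mul_of_nonneg_left _ (abs_nonneg _)
      rw [abs_of_nonneg (Set.indicator_nonneg (fun _ _ => zero_le_one) _)]
      by_cases hz : z.2 ∈ Set.Ioo 0 (h' z.1)
      · obtain ⟨hz1, hz2⟩ := Set.mem_Ioo.mp hz
        rw [Set.indicator_of_mem hz, Set.indicator_of_mem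
          (Set.mem_Ioo.mpr ⟨hz1, lt_of_lt_of_le hz2 (h'le z.1)⟩)]
      · rw [Set.indicator_of_notMem hz]
        exact Set.indicator_nonneg (fun _ _ => zero_le_one) _
  have congr2 : ∫ x in Set.Ioc α β, h' x * w x = ∫ x, (∫ t, F x t) ∂μ := by
    rw [hμ]
    exact (setIntegral_congr_fun measurableSet_Ioc (fun x _ => (hFx x).symm))
  rw [congr2, integral_integral_swap hFint]
  apply MeasureTheory.integral_nonneg
  intro t
  simp only [Pi.zero_apply]
  by_cases ht : 0 < t
  · -- the inner integral is ∫ over T of w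
    set T : Set ℝ := {x ∈ Set.Ioc α β | t < h' x} with hT
    have Tmeas : MeasurableSet T :=
      measurableSet_Ioc.inter (measurableSet_lt measurable_const h'meas)
    have inner_eq : ∫ x, F x t ∂μ = ∫ x in T, w x := by
      rw [hμ]
      have step : ∫ x in Set.Ioc α β, F x t = ∫ x in Set.Ioc α β, T.indicator w x := by
        apply setIntegral_congr_fun measurableSet_Ioc
        intro x hx
        simp only [hF]
        by_cases hxT : t < h' x
        · rw [Set.indicator_of_mem (Set.mem_Ioo.mpr ⟨ht, hxT⟩),
            Set.indicator_of_mem (show x ∈ T from ⟨hx, hxT⟩), mul_one]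
        · rw [Set.indicator_of_notMem (fun hmem => hxT (Set.mem_Ioo.mp hmem).2),
            Set.indicator_of_notMem (fun hmem => hxT hmem.2), mul_zero]
      rw [step, setIntegral_indicator Tmeas,
        Set.inter_eq_self_of_subset_right (fun x hx => hx.1)]
    rw [inner_eq]
    -- T is a.e. an interval Ioc α c
    by_cases hTne : T.Nonempty
    · set c : ℝ := sSup T with hc
      have hTbdd : BddAbove T := ⟨β, fun x hx => hx.1.2⟩
      have hcβ : c ≤ β := csSup_le hTne (fun x hx => hx.1.2)
      have hTne' := hTne
      obtain ⟨x₀, hx₀⟩ := hTne'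
      have hαc : α < c := lt_of_lt_of_le hx₀.1.1 (le_csSup hTbdd hx₀)
      have hsub1 : Set.Ioo α c ⊆ T := by
        intro y hy
        obtain ⟨x, hxT, hyx⟩ := exists_lt_of_lt_csSup hTne hy.2
        exact ⟨⟨hy.1, le_trans hyx.le hxT.1.2⟩, lt_of_lt_of_le hxT.2 (hanti hyx.le)⟩
      have hsub2 : T ⊆ Set.Ioc α c := fun x hx => ⟨hx.1.1, le_csSup hTbdd hx⟩
      have haeeq : T =ᵐ[volume] Set.Ioc α c := by
        rw [Filter.eventuallyEq_set]
        filter_upwards [MeasureTheory.compl_mem_ae_iff.mpr (measure_singleton c)] with x hx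
        constructor
        · exact fun hxT => hsub2 hxT
        · intro hxI
          exact hsub1 ⟨hxI.1, lt_of_le_of_ne hxI.2 (by simpa using hx)⟩
      rw [MeasureTheory.setIntegral_congr_set haeeq]
      have : ∫ x in Set.Ioc α c, w x = ∫ x in α..c, w x :=
        (intervalIntegral.integral_of_le hαc.le).symm
      rw [this]
      exact hP c ⟨hαc.le, hcβ⟩
    · rw [Set.not_nonempty_iff_eq_empty.mp hTne]
      simp
  · have : ∀ x, F x t = 0 := by
      intro x
      simp only [hF]
      rw [Set.indicator_of_notMem (fun hmem => ht hmem.1), mul_zero]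
    simp [this]

lemma rpow_mvt (q A x y : ℝ) (hq : 1 ≤ q) (h0 : 0 < y) (hyx : y ≤ x) (hxA : x ≤ A) :
    x ^ q - y ^ q ≤ q * A ^ (q - 1) * (x - y) := by
  rcases eq_or_lt_of_le hyx with rfl | hlt
  · rw [sub_self, sub_self, mul_zero]
  · have hx0 : 0 < x := h0.trans hlt
    have hA0 : 0 < A := hx0.trans_le hxA
    have hder : ∀ t : ℝ, HasDerivAt (fun s : ℝ => s ^ q) (q * t ^ (q - 1)) t :=
      fun t => Real.hasDerivAt_rpow_const (Or.inr hq)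
    obtain ⟨c, hc, hderiv⟩ := exists_deriv_eq_slope (fun s : ℝ => s ^ q) hlt
      (fun t _ => (hder t).continuousAt.continuousWithinAt)
      (fun t _ => (hder t).differentiableAt.differentiableWithinAt)
    rw [(hder c).deriv] at hderiv
    have hc0 : 0 < c := h0.trans hc.1
    have hcA : c ^ (q - 1) ≤ A ^ (q - 1) :=
      Real.rpow_le_rpow hc0.le (hc.2.le.trans hxA) (by linarith)
    have hxy : 0 < x - y := by linarith
    have : x ^ q - y ^ q = q * c ^ (q - 1) * (x - y) := by
      field_simp at hderiv
      linarith
    rw [this]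
    have hq0 : 0 < q := by linarith
    have := mul_le_mul_of_nonneg_left (mul_le_mul_of_nonneg_right hcA hxy.le) hq0.le
    linarith

lemma bound_one (α β a A b q : ℝ) (hab : α < β) (w f g : ℝ → ℝ)
    (hw : IntervalIntegrable w volume α β)
    (hP : ∀ x ∈ Set.Icc α β, 0 ≤ ∫ t in α..x, w t)
    (hf : AntitoneOn f (Set.Icc α β))
    (hg : AntitoneOn g (Set.Icc α β))
    (ha : 0 < a) (hb : 0 < b)
    (hfab : ∀ x ∈ Set.Icc α β, a ≤ f x ∧ f x ≤ A)
    (hgb : ∀ x ∈ Set.Icc α β, b ≤ g x)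
    (hq : 1 < q)
    (hfqw : IntervalIntegrable (fun x => f x ^ q * w x) volume α β)
    (hfgw : IntervalIntegrable (fun x => f x * g x * w x) volume α β) :
    ∫ x in α..β, f x ^ q * w x ≤ (q * A ^ (q - 1) / b) * ∫ x in α..β, f x * g x * w x := by
  have hαI : α ∈ Set.Icc α β := left_mem_Icc.2 hab.le
  have hA : 0 < A := lt_of_lt_of_le ha ((hfab α hαI).1.trans (hfab α hαI).2)
  set c1 : ℝ := q * A ^ (q - 1) / b with hc1
  have hApow : 0 < A ^ (q - 1) := Real.rpow_pos_of_pos hA _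
  have hc1pos : 0 < c1 := by positivity
  have hc1b : c1 * b = q * A ^ (q - 1) := by rw [hc1, div_mul_cancel₀ _ hb.ne']
  have hkey : 0 ≤ ∫ x in α..β, (c1 * (f x * g x) - f x ^ q) * w x := by
    apply key_steffensen α β hab w _ hw hP
    · intro x hx y hy hxy
      have h1 : f y ≤ f x := hf hx hy hxy
      have h2 : g y ≤ g x := hg hx hy hxy
      have h3 : a ≤ f y := (hfab y hy).1
      have h4 : f x ≤ A := (hfab x hx).2
      have h5 : b ≤ g x := hgb x hx
      have hmvt : f x ^ q - f y ^ q ≤ q * A ^ (q - 1) * (f x - f y) :=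
        rpow_mvt q A (f x) (f y) hq.le (ha.trans_le h3) h1 h4
      have k1 : b * (f x - f y) ≤ f x * g x - f y * g y := by
        nlinarith [mul_nonneg (sub_nonneg.2 h5) (sub_nonneg.2 h1),
          mul_nonneg (le_trans ha.le h3) (sub_nonneg.2 h2)]
      have k2 := mul_le_mul_of_nonneg_left k1 hc1pos.le
      dsimp only
      nlinarith [hmvt, k2, hc1b]
    · intro x hx
      have h3 : a ≤ f x := (hfab x hx).1
      have h4 : f x ≤ A := (hfab x hx).2
      have h5 : b ≤ g x := hgb x hx
      have hfx : 0 < f x := ha.trans_le h3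
      have e1 : f x ^ q = f x ^ (q - 1) * f x := by
        rw [← Real.rpow_add_one hfx.ne' (q - 1), sub_add_cancel]
      have e2 : f x ^ (q - 1) ≤ A ^ (q - 1) :=
        Real.rpow_le_rpow hfx.le h4 (by linarith)
      nlinarith [mul_le_mul_of_nonneg_right e2 hfx.le,
        mul_nonneg (mul_nonneg hc1pos.le hfx.le) (sub_nonneg.2 h5),
        mul_nonneg (mul_nonneg (show (0:ℝ) ≤ q - 1 by linarith) hApow.le) hfx.le,
        hc1b, e1]
  have heq : ∫ x in α..β, (c1 * (f x * g x) - f x ^ q) * w x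
      = c1 * (∫ x in α..β, f x * g x * w x) - ∫ x in α..β, f x ^ q * w x := by
    have : (fun x => (c1 * (f x * g x) - f x ^ q) * w x)
        = fun x => c1 * (f x * g x * w x) - f x ^ q * w x := by
      funext x; ring
    rw [this, intervalIntegral.integral_sub (hfgw.const_mul c1) hfqw,
      intervalIntegral.integral_const_mul]
  linarith [heq ▸ hkey]

end Aux

theorem stmt_15 (α β a A b B p q : ℝ) (hab : α < β) (w f g : ℝ → ℝ)
    (hw : IntervalIntegrable w volume α β)
    (hP : ∀ x ∈ Set.Icc α β, 0 ≤ ∫ t in α..x, w t)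
    (hf : AntitoneOn f (Set.Icc α β))
    (hfdiff : DifferentiableOn ℝ f (Set.Icc α β))
    (hg : AntitoneOn g (Set.Icc α β))
    (hgdiff : DifferentiableOn ℝ g (Set.Icc α β))
    (ha : 0 < a) (hb : 0 < b)
    (hfab : ∀ x ∈ Set.Icc α β, a ≤ f x ∧ f x ≤ A)
    (hgab : ∀ x ∈ Set.Icc α β, b ≤ g x ∧ g x ≤ B)
    (hp : 1 < p) (hq : 1 < q) (hpq : 1 / p + 1 / q = 1)
    (hfqw : IntervalIntegrable (fun x => f x ^ q * w x) volume α β)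
    (hgpw : IntervalIntegrable (fun x => g x ^ p * w x) volume α β)
    (hfgw : IntervalIntegrable (fun x => f x * g x * w x) volume α β) :
    (∫ x in α..β, f x ^ q * w x) ^ (1 / q) * (∫ x in α..β, g x ^ p * w x) ^ (1 / p) ≤
      (p * A / a) ^ (1 / p) * (q * B / b) ^ (1 / q) * ∫ x in α..β, f x * g x * w x := by
  have hαI : α ∈ Set.Icc α β := Set.left_mem_Icc.2 hab.le
  have hA : 0 < A := lt_of_lt_of_le ha ((hfab α hαI).1.trans (hfab α hαI).2)
  have hB : 0 < B := lt_of_lt_of_le hb ((hgab α hαI).1.trans (hgab α hαI).2)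
  have hp0 : 0 < p := by linarith
  have hq0 : 0 < q := by linarith
  set u := ∫ x in α..β, f x ^ q * w x with hu
  set v := ∫ x in α..β, g x ^ p * w x with hv
  set I := ∫ x in α..β, f x * g x * w x with hI
  have hfpos : ∀ x ∈ Set.Icc α β, 0 < f x := fun x hx => ha.trans_le (hfab x hx).1
  have hgpos : ∀ x ∈ Set.Icc α β, 0 < g x := fun x hx => hb.trans_le (hgab x hx).1
  have hI0 : 0 ≤ I := by
    apply key_steffensen α β hab w (fun x => f x * g x) hw hP
    · intro x hx y hy hxy
      exact mul_le_mul (hf hx hy hxy) (hg hx hy hxy) (hgpos y hy).le (hfpos x hx).le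
    · exact fun x hx => mul_nonneg (hfpos x hx).le (hgpos x hx).le
  have hu0 : 0 ≤ u := by
    apply key_steffensen α β hab w (fun x => f x ^ q) hw hP
    · intro x hx y hy hxy
      exact Real.rpow_le_rpow (hfpos y hy).le (hf hx hy hxy) hq0.le
    · exact fun x hx => Real.rpow_nonneg (hfpos x hx).le q
  have hv0 : 0 ≤ v := by
    apply key_steffensen α β hab w (fun x => g x ^ p) hw hP
    · intro x hx y hy hxy
      exact Real.rpow_le_rpow (hgpos y hy).le (hg hx hy hxy) hp0.le
    · exact fun x hx => Real.rpow_nonneg (hgpos x hx).le p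
  set c1 : ℝ := q * A ^ (q - 1) / b with hc1
  set c2 : ℝ := p * B ^ (p - 1) / a with hc2
  have hc1pos : 0 < c1 := by
    have := Real.rpow_pos_of_pos hA (q - 1); positivity
  have hc2pos : 0 < c2 := by
    have := Real.rpow_pos_of_pos hB (p - 1); positivity
  have hub : u ≤ c1 * I :=
    bound_one α β a A b q hab w f g hw hP hf hg ha hb hfab
      (fun x hx => (hgab x hx).1) hq hfqw hfgw
  have hgf : (fun x => g x * f x * w x) = fun x => f x * g x * w x := by
    funext x; ring
  have hvb : v ≤ c2 * I := by
    have h := bound_one α β b B a p hab w g f hw hP hg hf hb ha hgab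
      (fun x hx => (hfab x hx).1) hp hgpw (by rw [hgf]; exact hfgw)
    rwa [hgf] at h
  have hsum : 1 / q + 1 / p = 1 := by linarith
  have hIpow : I ^ (1 / q) * I ^ (1 / p) = I := by
    rw [← Real.rpow_add' hI0 (by rw [hsum]; norm_num), hsum, Real.rpow_one]
  have e1 : (q - 1) * (1 / q) = 1 / p := by
    field_simp
    field_simp at hpq
    linarith
  have e2 : (p - 1) * (1 / p) = 1 / q := by
    field_simp
    field_simp at hpq
    linarith
  have hconst : c1 ^ (1 / q) * c2 ^ (1 / p) = (p * A / a) ^ (1 / p) * (q * B / b) ^ (1 / q) := by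
    rw [hc1, hc2,
      Real.div_rpow (mul_nonneg hq0.le (Real.rpow_nonneg hA.le _)) hb.le,
      Real.div_rpow (mul_nonneg hp0.le (Real.rpow_nonneg hB.le _)) ha.le,
      Real.div_rpow (mul_nonneg hp0.le hA.le) ha.le,
      Real.div_rpow (mul_nonneg hq0.le hB.le) hb.le,
      Real.mul_rpow hq0.le (Real.rpow_nonneg hA.le _),
      Real.mul_rpow hp0.le (Real.rpow_nonneg hB.le _),
      Real.mul_rpow hp0.le hA.le, Real.mul_rpow hq0.le hB.le,
      ← Real.rpow_mul hA.le, ← Real.rpow_mul hB.le, e1, e2]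
    ring
  calc u ^ (1 / q) * v ^ (1 / p)
      ≤ (c1 * I) ^ (1 / q) * ((c2 * I) ^ (1 / p)) := by
        apply mul_le_mul (Real.rpow_le_rpow hu0 hub (by positivity))
          (Real.rpow_le_rpow hv0 hvb (by positivity))
          (Real.rpow_nonneg hv0 _)
          (Real.rpow_nonneg (mul_nonneg hc1pos.le hI0) _)
    _ = c1 ^ (1 / q) * c2 ^ (1 / p) * (I ^ (1 / q) * I ^ (1 / p)) := by
        rw [Real.mul_rpow hc1pos.le hI0, Real.mul_rpow hc2pos.le hI0]; ring
    _ = c1 ^ (1 / q) * c2 ^ (1 / p) * I := by rw [hIpow]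
    _ = (p * A / a) ^ (1 / p) * (q * B / b) ^ (1 / q) * I := by rw [hconst]
end

section
/- Let α < β be real numbers, let w : ℝ → ℝ be integrable on [α, β], and set P(x) := ∫_α^x w(t) dt, with P(x) ≥ 0 for all x ∈ [α, β]. Let f and g be non-negative, non-increasing, differentiable functions on [α, β], and let p ≥ 1. Assume the functions f^p·w, g^p·w, and (f+g)^p·w are integrable on [α, β]. Then (∫_α^β f(x)^p w(x) dx)^{1/p} + (∫_α^β g(x)^p w(x) dx)^{1/p} ≤ 2^{1 − 1/p} · (∫_α^β (f(x) + g(x))^p w(x) dx)^{1/p}. (Here the three integrals are non-negative, so the real powers are well defined.) -/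
open Real MeasureTheory intervalIntegral

open Real MeasureTheory Set

lemma convex_diff_mono {h : ℝ → ℝ} (hh : ConvexOn ℝ (Set.Ici 0) h) {x y c : ℝ}
    (hx : 0 ≤ x) (hxy : x ≤ y) (hc : 0 ≤ c) : h (x + c) - h x ≤ h (y + c) - h y := by
  rcases eq_or_lt_of_le hc with rfl | hc
  · simp
  rcases eq_or_lt_of_le hxy with rfl | hxy
  · simp
  have hy : (0:ℝ) ≤ y := hx.trans hxy.le
  have h1 : (h (x + c) - h x) / (x + c - x) ≤ (h (y + c) - h x) / (y + c - x) :=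
    hh.secant_mono (Set.mem_Ici.2 hx) (Set.mem_Ici.2 (by linarith)) (Set.mem_Ici.2 (by linarith))
      (by linarith) (by linarith) (by linarith)
  have h2 : (h x - h (y + c)) / (x - (y + c)) ≤ (h y - h (y + c)) / (y - (y + c)) :=
    hh.secant_mono (Set.mem_Ici.2 (by linarith)) (Set.mem_Ici.2 hx) (Set.mem_Ici.2 hy)
      (by linarith) (by linarith) hxy.le
  have e1 : (h x - h (y + c)) / (x - (y + c)) = (h (y+c) - h x)/(y + c - x) := by
    rw [← neg_div_neg_eq]; ring_nf
  have e2 : (h y - h (y + c)) / (y - (y + c)) = (h (y+c) - h y)/c := by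
    rw [← neg_div_neg_eq]; ring_nf
  rw [e1, e2] at h2
  have h12 := h1.trans h2
  rw [add_sub_cancel_left, div_le_div_iff₀ hc hc] at h12
  nlinarith

lemma pm_ineq {a b p : ℝ} (ha : 0 ≤ a) (hb : 0 ≤ b) (hp : 1 ≤ p) :
    a ^ (1/p) + b ^ (1/p) ≤ 2 ^ (1 - 1/p) * (a + b) ^ (1/p) := by
  have hp0 : 0 < p := lt_of_lt_of_le one_pos hp
  set u := a ^ (1/p) with hu
  set v := b ^ (1/p) with hv
  have hu0 : 0 ≤ u := rpow_nonneg ha _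
  have hv0 : 0 ≤ v := rpow_nonneg hb _
  have hup : u ^ p = a := by
    rw [hu, one_div]; exact Real.rpow_inv_rpow ha hp0.ne'
  have hvp : v ^ p = b := by
    rw [hv, one_div]; exact Real.rpow_inv_rpow hb hp0.ne'
  have key : (u + v) ^ p ≤ 2 ^ (p - 1) * (a + b) := by
    have := NNReal.rpow_add_le_mul_rpow_add_rpow u.toNNReal v.toNNReal hp
    have h2 := (NNReal.coe_le_coe.2 this)
    push_cast at h2
    rw [Real.coe_toNNReal u hu0, Real.coe_toNNReal v hv0] at h2
    calc (u + v) ^ p ≤ 2 ^ (p-1) * (u ^ p + v ^ p) := h2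
    _ = 2 ^ (p - 1) * (a + b) := by rw [hup, hvp]
  have h3 : u + v ≤ (2 ^ (p - 1) * (a + b)) ^ (1/p) := by
    have h4 := Real.rpow_le_rpow (by positivity) key (by positivity : (0:ℝ) ≤ 1/p)
    rw [one_div] at h4
    rw [one_div]
    rwa [Real.rpow_rpow_inv (by positivity) hp0.ne'] at h4
  refine h3.trans (le_of_eq ?_)
  rw [Real.mul_rpow (by positivity) (by linarith), ← Real.rpow_mul (by norm_num : (0:ℝ) ≤ 2)]
  congr 1
  field_simp

open Set in

lemma key_nonneg (α β : ℝ) (hab : α ≤ β) (w ψ : ℝ → ℝ)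
    (hw : IntervalIntegrable w volume α β)
    (hP : ∀ x ∈ Set.Icc α β, 0 ≤ ∫ t in α..x, w t)
    (hψc : Continuous ψ) (hψa : AntitoneOn ψ (Set.Icc α β)) (hψ0 : 0 ≤ ψ β) :
    0 ≤ ∫ x in α..β, ψ x * w x := by
  have hsub : IntervalIntegrable (fun x => (ψ x - ψ β) * w x) volume α β :=
    hw.continuousOn_mul ((hψc.sub continuous_const).continuousOn)
  have hcw : IntervalIntegrable (fun x => ψ β * w x) volume α β := hw.const_mul _
  have hsplit : (∫ x in α..β, ψ x * w x)
      = (∫ x in α..β, (ψ x - ψ β) * w x) + ψ β * ∫ x in α..β, w x := by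
    rw [← intervalIntegral.integral_const_mul, ← intervalIntegral.integral_add hsub hcw]
    apply intervalIntegral.integral_congr
    intro x _; ring
  rw [hsplit]
  have hterm2 : 0 ≤ ψ β * ∫ x in α..β, w x :=
    mul_nonneg hψ0 (hP β ⟨hab, le_rfl⟩)
  refine add_nonneg ?_ hterm2
  -- main term via Fubini
  set μ := volume.restrict (Set.Ioc α β) with hμ
  set E : Set (ℝ × ℝ) := {z : ℝ × ℝ | ψ β ≤ z.2 ∧ z.2 < ψ z.1} with hE
  have hEmeas : MeasurableSet E := by
    apply MeasurableSet.inter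
    · exact measurable_snd measurableSet_Ici
    · exact measurableSet_lt measurable_snd (hψc.measurable.comp measurable_fst)
  set J : ℝ × ℝ → ℝ := fun z => w z.1 * E.indicator (fun _ => (1:ℝ)) z with hJ
  have hslice : ∀ x, (fun s => J (x, s)) =
      fun s => w x * (Set.Ico (ψ β) (ψ x)).indicator (fun _ => (1:ℝ)) s := by
    intro x; funext s
    simp only [hJ, Set.indicator_apply, hE, Set.mem_setOf_eq, Set.mem_Ico]
  -- inner integral in s
  have hinner : ∀ x ∈ Set.Ioc α β, (∫ s, J (x, s)) = (ψ x - ψ β) * w x := by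
    intro x hx
    have hψx : ψ β ≤ ψ x := hψa ⟨hx.1.le, hx.2⟩ ⟨hab, le_rfl⟩ hx.2
    rw [hslice x, MeasureTheory.integral_const_mul,
      MeasureTheory.integral_indicator_const (1:ℝ) measurableSet_Ico]
    rw [Real.volume_real_Ico_of_le hψx]
    simp [mul_comm]
  -- integrability on the product
  have hwInt : IntegrableOn w (Set.Ioc α β) := hw.1
  have hwaesm : AEStronglyMeasurable (fun z : ℝ × ℝ => w z.1) (μ.prod volume) := by
    obtain ⟨w', hw'm, hw'ae⟩ := hwInt.aestronglyMeasurable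
    refine ⟨fun z => w' z.1, hw'm.comp_measurable measurable_fst, ?_⟩
    obtain ⟨N, hNsub, hNmeas, hN0⟩ := MeasureTheory.exists_measurable_superset_of_null
      (ae_iff.1 hw'ae)
    have : (μ.prod volume) {z : ℝ × ℝ | ¬ w z.1 = w' z.1} = 0 := by
      refine MeasureTheory.measure_mono_null (t := N ×ˢ Set.univ)
        (fun z hz => Set.mem_prod.2 ⟨hNsub hz, Set.mem_univ _⟩) ?_
      rw [MeasureTheory.Measure.prod_prod, hN0, zero_mul]
    exact ae_iff.2 this
  have hJaesm : AEStronglyMeasurable J (μ.prod volume) :=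
    hwaesm.mul ((measurable_const.indicator hEmeas).aestronglyMeasurable)
  set K : ℝ × ℝ → ℝ := fun z => |w z.1| * (Set.Ico (ψ β) (ψ α)).indicator (fun _ => (1:ℝ)) z.2
    with hK
  have hKint : Integrable K (μ.prod volume) := by
    apply MeasureTheory.Integrable.mul_prod (hwInt.abs)
    rw [MeasureTheory.integrable_indicator_iff measurableSet_Ico]
    exact MeasureTheory.integrableOn_const
      (by rw [Real.volume_Ico]; exact ENNReal.ofReal_ne_top)
  have hae : ∀ᵐ (z : ℝ × ℝ) ∂(μ.prod volume), z.1 ∈ Set.Ioc α β := by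
    rw [MeasureTheory.ae_iff]
    refine MeasureTheory.measure_mono_null (t := (Set.Ioc α β)ᶜ ×ˢ Set.univ)
      (fun z hz => Set.mem_prod.2 ⟨hz, Set.mem_univ _⟩) ?_
    rw [MeasureTheory.Measure.prod_prod, hμ,
      MeasureTheory.Measure.restrict_apply measurableSet_Ioc.compl]
    simp
  have hJint : Integrable J (μ.prod volume) := by
    refine hKint.mono hJaesm ?_
    filter_upwards [hae] with z hz
    by_cases hzE : z ∈ E
    · have h1 : ψ z.1 ≤ ψ α := hψa ⟨le_rfl, hab⟩ ⟨hz.1.le, hz.2⟩ hz.1.le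
      have h2 : z.2 ∈ Set.Ico (ψ β) (ψ α) := ⟨hzE.1, lt_of_lt_of_le hzE.2 h1⟩
      simp [hJ, hK, Set.indicator_of_mem hzE, Set.indicator_of_mem h2, abs_mul, abs_abs]
    · rw [show J z = 0 from by simp [hJ, Set.indicator_of_notMem hzE]]
      simp only [norm_zero]
      exact norm_nonneg _
  -- swap
  have hswap : (∫ x in α..β, (ψ x - ψ β) * w x) = ∫ s, (∫ x, J (x, s) ∂μ) := by
    rw [intervalIntegral.integral_of_le hab]
    have h1 : (∫ x in Set.Ioc α β, (ψ x - ψ β) * w x) = ∫ x, (∫ s, J (x, s)) ∂μ :=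
      (MeasureTheory.setIntegral_congr_fun measurableSet_Ioc
        (fun x hx => (hinner x hx).symm))
    rw [h1]
    exact MeasureTheory.integral_integral_swap hJint
  rw [hswap]
  apply MeasureTheory.integral_nonneg
  intro s
  show (0:ℝ) ≤ ∫ x, J (x, s) ∂μ
  by_cases hs : ψ β ≤ s
  · have hrw : (fun x => J (x, s)) = (ψ ⁻¹' Set.Ioi s).indicator w := by
      funext x
      by_cases hx : s < ψ x
      · simp [hJ, hE, Set.indicator_apply, hs, hx]
      · simp [hJ, hE, Set.indicator_apply, hs, hx]
    rw [hrw, hμ, MeasureTheory.setIntegral_indicator (hψc.measurable measurableSet_Ioi)]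
    set T := Set.Ioc α β ∩ ψ ⁻¹' Set.Ioi s with hT
    rcases Set.eq_empty_or_nonempty T with hTe | hTne
    · rw [hTe]; simp
    · set c := sSup T with hc
      have hTsub : T ⊆ Set.Ioc α β := Set.inter_subset_left
      have hbdd : BddAbove T := ⟨β, fun x hx => (hTsub hx).2⟩
      have hcβ : c ≤ β := csSup_le hTne (fun x hx => (hTsub hx).2)
      have hαc : α < c := by
        obtain ⟨x0, hx0⟩ := hTne
        exact lt_of_lt_of_le (hTsub hx0).1 (le_csSup hbdd hx0)
      have hsub1 : Set.Ioo α c ⊆ T := by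
        intro x hx
        obtain ⟨y, hyT, hxy⟩ := exists_lt_of_lt_csSup hTne hx.2
        have hyI := hTsub hyT
        have hxβ : x ≤ β := le_trans hx.2.le hcβ
        have hψxy : ψ y ≤ ψ x := hψa ⟨hx.1.le, hxβ⟩ ⟨hyI.1.le, hyI.2⟩ hxy.le
        exact ⟨⟨hx.1, hxβ⟩, lt_of_lt_of_le hyT.2 hψxy⟩
      have hsub2 : T ⊆ Set.Ioc α c := fun x hx => ⟨(hTsub hx).1, le_csSup hbdd hx⟩
      have hTae : T =ᵐ[volume] Set.Ioc α c := by
        rw [MeasureTheory.ae_eq_set]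
        constructor
        · rw [Set.diff_eq_empty.2 hsub2]; simp
        · refine MeasureTheory.measure_mono_null (fun x hx => ?_) (volume_singleton (a := c))
          have : x ∉ Set.Ioo α c := fun h => hx.2 (hsub1 h)
          have hxc : x = c := by
            rcases lt_or_eq_of_le hx.1.2 with h | h
            · exact absurd ⟨hx.1.1, h⟩ this
            · exact h
          exact hxc ▸ rfl
      rw [MeasureTheory.setIntegral_congr_set hTae]
      have := hP c ⟨hαc.le, hcβ⟩
      rwa [intervalIntegral.integral_of_le hαc.le] at this
  · have hrw : ∀ x, J (x, s) = 0 := by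
      intro x
      have : (x, s) ∉ E := fun h => hs h.1
      simp [hJ, Set.indicator_of_notMem this]
    simp [hrw]

theorem stmt_16 (α β p : ℝ) (hab : α < β) (hp : 1 ≤ p) (w f g : ℝ → ℝ)
    (hw : IntervalIntegrable w volume α β)
    (hP : ∀ x ∈ Set.Icc α β, 0 ≤ ∫ t in α..x, w t)
    (hf0 : ∀ x ∈ Set.Icc α β, 0 ≤ f x)
    (hf : AntitoneOn f (Set.Icc α β))
    (hfdiff : DifferentiableOn ℝ f (Set.Icc α β))
    (hg0 : ∀ x ∈ Set.Icc α β, 0 ≤ g x)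
    (hg : AntitoneOn g (Set.Icc α β))
    (hgdiff : DifferentiableOn ℝ g (Set.Icc α β))
    (hfpw : IntervalIntegrable (fun x => f x ^ p * w x) volume α β)
    (hgpw : IntervalIntegrable (fun x => g x ^ p * w x) volume α β)
    (hfgpw : IntervalIntegrable (fun x => (f x + g x) ^ p * w x) volume α β) :
    (∫ x in α..β, f x ^ p * w x) ^ (1 / p) + (∫ x in α..β, g x ^ p * w x) ^ (1 / p) ≤
      2 ^ (1 - 1 / p) * (∫ x in α..β, (f x + g x) ^ p * w x) ^ (1 / p) := by
  have hab' : α ≤ β := hab.le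
  have hp0 : (0:ℝ) ≤ p := le_trans zero_le_one hp
  set q : ℝ → ℝ := fun x => max α (min x β) with hq
  have hqc : Continuous q := continuous_const.max (continuous_id.min continuous_const)
  have hqmem : ∀ x, q x ∈ Set.Icc α β :=
    fun x => ⟨le_max_left _ _, max_le hab' (min_le_right x β)⟩
  have hqid : ∀ x ∈ Set.Icc α β, q x = x := by
    intro x hx
    rw [hq]; simp only
    rw [min_eq_left hx.2, max_eq_right hx.1]
  have hqmono : Monotone q := monotone_const.max (monotone_id.min monotone_const)
  set F : ℝ → ℝ := fun x => f (q x) with hF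
  set G : ℝ → ℝ := fun x => g (q x) with hG
  have hFc : Continuous F := hfdiff.continuousOn.comp_continuous hqc hqmem
  have hGc : Continuous G := hgdiff.continuousOn.comp_continuous hqc hqmem
  have hF0 : ∀ x, 0 ≤ F x := fun x => hf0 _ (hqmem x)
  have hG0 : ∀ x, 0 ≤ G x := fun x => hg0 _ (hqmem x)
  have hFanti : ∀ ⦃x y : ℝ⦄, x ≤ y → F y ≤ F x :=
    fun x y h => hf (hqmem x) (hqmem y) (hqmono h)
  have hGanti : ∀ ⦃x y : ℝ⦄, x ≤ y → G y ≤ G x :=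
    fun x y h => hg (hqmem x) (hqmem y) (hqmono h)
  have hFeq : ∀ x ∈ Set.Icc α β, F x = f x := fun x hx => by rw [hF]; simp only; rw [hqid x hx]
  have hGeq : ∀ x ∈ Set.Icc α β, G x = g x := fun x hx => by rw [hG]; simp only; rw [hqid x hx]
  have hconv : ConvexOn ℝ (Set.Ici 0) (fun x : ℝ => x ^ p) := convexOn_rpow hp
  -- first integral nonneg
  have key1 : ∀ (F : ℝ → ℝ), Continuous F → (∀ x, 0 ≤ F x) →
      (∀ ⦃x y : ℝ⦄, x ≤ y → F y ≤ F x) →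
      0 ≤ ∫ x in α..β, F x ^ p * w x := by
    intro F hFc hF0 hFanti
    refine key_nonneg α β hab' w (fun x => F x ^ p) hw hP
      (hFc.rpow_const (fun x => Or.inr hp0)) ?_ (Real.rpow_nonneg (hF0 β) p)
    intro x _ y _ hxy
    exact Real.rpow_le_rpow (hF0 y) (hFanti hxy) hp0
  have e1 : ∫ x in α..β, F x ^ p * w x = ∫ x in α..β, f x ^ p * w x := by
    apply intervalIntegral.integral_congr
    intro x hx
    rw [Set.uIcc_of_le hab'] at hx
    simp only [hFeq x hx]
  have e2 : ∫ x in α..β, G x ^ p * w x = ∫ x in α..β, g x ^ p * w x := by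
    apply intervalIntegral.integral_congr
    intro x hx
    rw [Set.uIcc_of_le hab'] at hx
    simp only [hGeq x hx]
  have hI1 : 0 ≤ ∫ x in α..β, f x ^ p * w x := e1 ▸ key1 F hFc hF0 hFanti
  have hI2 : 0 ≤ ∫ x in α..β, g x ^ p * w x := e2 ▸ key1 G hGc hG0 hGanti
  -- superadditivity integral
  have hψ3 : 0 ≤ ∫ x in α..β, ((F x + G x) ^ p - F x ^ p - G x ^ p) * w x := by
    refine key_nonneg α β hab' w _ hw hP ?_ ?_ ?_
    · exact (((hFc.add hGc).rpow_const (fun x => Or.inr hp0)).sub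
        (hFc.rpow_const (fun x => Or.inr hp0))).sub (hGc.rpow_const (fun x => Or.inr hp0))
    · intro x _ y _ hxy
      dsimp only
      have s1 := convex_diff_mono hconv (hF0 y) (hFanti hxy) (hG0 y)
      have s2 := convex_diff_mono hconv (hG0 y) (hGanti hxy) (hF0 x)
      rw [add_comm (G y) (F x), add_comm (G x) (F x)] at s2
      linarith
    · skip
      have s0 := convex_diff_mono hconv le_rfl (hF0 β) (hG0 β)
      rw [zero_add, Real.zero_rpow (by linarith : p ≠ 0)] at s0
      linarith
  have e3 : ∫ x in α..β, ((F x + G x) ^ p - F x ^ p - G x ^ p) * w x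
      = ∫ x in α..β, ((f x + g x) ^ p * w x - f x ^ p * w x - g x ^ p * w x) := by
    apply intervalIntegral.integral_congr
    intro x hx
    rw [Set.uIcc_of_le hab'] at hx
    simp only [hFeq x hx, hGeq x hx]
    ring
  have hI12 : (∫ x in α..β, f x ^ p * w x) + (∫ x in α..β, g x ^ p * w x)
      ≤ ∫ x in α..β, (f x + g x) ^ p * w x := by
    rw [e3, intervalIntegral.integral_sub (hfgpw.sub hfpw) hgpw,
      intervalIntegral.integral_sub hfgpw hfpw] at hψ3
    linarith
  have hI : 0 ≤ ∫ x in α..β, (f x + g x) ^ p * w x := by linarith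
  calc (∫ x in α..β, f x ^ p * w x) ^ (1 / p) + (∫ x in α..β, g x ^ p * w x) ^ (1 / p)
      ≤ 2 ^ (1 - 1/p) *
        ((∫ x in α..β, f x ^ p * w x) + (∫ x in α..β, g x ^ p * w x)) ^ (1/p) :=
        pm_ineq hI1 hI2 hp
    _ ≤ 2 ^ (1 - 1 / p) * (∫ x in α..β, (f x + g x) ^ p * w x) ^ (1 / p) := by
        apply mul_le_mul_of_nonneg_left
          (Real.rpow_le_rpow (add_nonneg hI1 hI2) hI12 (by positivity))
          (by positivity)
end
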